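/- arXiv:1505.00768 — 2 statements merged into one kernel-verified Lean document; each statement's English description precedes it below -/
import Mathlib

section
/- Let N ≥ 1, let D = diag(δ₁,…,δ_N) with δᵢ > 0, and let B = (β_{ij}) be a nonnegative irreducible matrix. If every complex eigenvalue of B − D has real part at most 0, then every differentiable p : [0,∞) → ℝ^N with p(0) ∈ [0,1]^N satisfying pᵢ'(t) = −δᵢ pᵢ(t) + Σ_{j=1}^N β_{ij} p_j(t)(1 − pᵢ(t)) for all i and all t ≥ 0 converges to 0 as t → ∞. -/
open Filter Set

/-- A nonnegative matrix is irreducible if, for every nonempty proper subset `S` of the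
index set, there is an edge leaving `S` (equivalently, the underlying directed graph is
strongly connected). -/
def MatrixIrreducible {N : ℕ} (B : Matrix (Fin N) (Fin N) ℝ) : Prop :=
  ∀ S : Finset (Fin N), S.Nonempty → S ≠ Finset.univ →
    ∃ i ∈ S, ∃ j, j ∉ S ∧ B i j ≠ 0

lemma deriv_nonneg_of_left_le {g : ℝ → ℝ} {d a t₀ : ℝ} (hg : HasDerivAt g d t₀)
    (hat : a < t₀) (hle : ∀ t, a ≤ t → t < t₀ → g t ≤ g t₀) : 0 ≤ d := by
  have h := hasDerivAt_iff_tendsto_slope.mp hg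
  have h2 : Tendsto (slope g t₀) (nhdsWithin t₀ (Set.Iio t₀)) (nhds d) :=
    h.mono_left (nhdsWithin_mono _ (by intro x hx; simp [Set.mem_Iio] at hx ⊢; exact ne_of_lt hx))
  refine ge_of_tendsto h2 ?_
  filter_upwards [Ioo_mem_nhdsLT_of_mem (by constructor <;> [exact hat; rfl] :
      t₀ ∈ Set.Ioc a t₀)] with t ht
  have h3 : g t ≤ g t₀ := hle t ht.1.le ht.2
  have h4 : t - t₀ < 0 := by linarith [ht.2]
  rw [slope_def_field]
  show 0 ≤ (g t - g t₀) / (t - t₀)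
  exact div_nonneg_of_nonpos (by linarith) h4.le

lemma deriv_nonpos_of_left_ge {g : ℝ → ℝ} {d a t₀ : ℝ} (hg : HasDerivAt g d t₀)
    (hat : a < t₀) (hge : ∀ t, a ≤ t → t < t₀ → g t₀ ≤ g t) : d ≤ 0 := by
  have := deriv_nonneg_of_left_le (hg.neg) hat (fun t h1 h2 => neg_le_neg (hge t h1 h2))
  linarith

lemma isClosed_sep_le {C : Set ℝ} (hC : IsClosed C) {f : ℝ → ℝ}
    (hf : ∀ x ∈ C, ContinuousAt f x) : IsClosed {x | x ∈ C ∧ f x ≤ 0} := by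
  apply IsSeqClosed.isClosed
  intro xs x hxs hx
  have hxC : x ∈ C := hC.isSeqClosed (fun n => (hxs n).1) hx
  refine ⟨hxC, ?_⟩
  have : Tendsto (f ∘ xs) atTop (nhds (f x)) := ((hf x hxC).tendsto).comp hx
  exact le_of_tendsto this (Filter.Eventually.of_forall fun n => (hxs n).2)

lemma MatrixIrreducible.rev {N : ℕ} {B : Matrix (Fin N) (Fin N) ℝ}
    (h : MatrixIrreducible B) (S : Finset (Fin N)) (h1 : S.Nonempty) (h2 : S ≠ Finset.univ) :
    ∃ i, i ∉ S ∧ ∃ j ∈ S, B i j ≠ 0 := by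
  have hc1 : Sᶜ.Nonempty := by
    rw [← Finset.card_pos, Finset.card_compl]
    have := (Finset.card_lt_iff_ne_univ S).mpr h2
    omega
  have hc2 : Sᶜ ≠ Finset.univ := by
    intro hh
    obtain ⟨x, hx⟩ := h1
    have : x ∈ Sᶜ := hh ▸ Finset.mem_univ x
    exact (Finset.mem_compl.mp this) hx
  obtain ⟨i, hi, j, hj, hij⟩ := h Sᶜ hc1 hc2
  exact ⟨i, Finset.mem_compl.mp hi, j, by simpa using hj, hij⟩

lemma mulVec_nonneg {N : ℕ} {M : Matrix (Fin N) (Fin N) ℝ} (hM0 : ∀ i j, 0 ≤ M i j)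
    {v : Fin N → ℝ} (hv : ∀ i, 0 ≤ v i) : ∀ i, 0 ≤ M.mulVec v i := by
  intro i
  rw [Matrix.mulVec, dotProduct]
  exact Finset.sum_nonneg fun j _ => mul_nonneg (hM0 i j) (hv j)

lemma mulVec_pos_pow {N : ℕ} {M : Matrix (Fin N) (Fin N) ℝ}
    (hM0 : ∀ i j, 0 ≤ M i j) (hMd : ∀ i, 0 < M i i)
    (hedge : ∀ S : Finset (Fin N), S.Nonempty → S ≠ Finset.univ →
      ∃ i, i ∉ S ∧ ∃ j ∈ S, M i j ≠ 0) :
    ∀ (k : ℕ) (v : Fin N → ℝ), (∀ i, 0 ≤ v i) → v ≠ 0 →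
      N ≤ (Finset.filter (fun i => v i ≠ 0) Finset.univ).card + k →
      ∀ i, 0 < ((M ^ k).mulVec v) i := by
  intro k
  induction k with
  | zero =>
    intro v hv hv0 hcard i
    rw [pow_zero, Matrix.one_mulVec]
    have : (Finset.filter (fun i => v i ≠ 0) Finset.univ) = Finset.univ := by
      apply Finset.eq_univ_of_card
      have h1 : (Finset.filter (fun i => v i ≠ 0) Finset.univ).card ≤ Fintype.card (Fin N) :=
        Finset.card_le_univ _
      simp only [Fintype.card_fin] at h1 ⊢
      omega
    have : v i ≠ 0 := by
      have := Finset.mem_filter.mp (this ▸ Finset.mem_univ i)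
      exact this.2
    exact lt_of_le_of_ne (hv i) (Ne.symm this)
  | succ k ih =>
    intro v hv hv0 hcard i
    have key : (M ^ (k + 1)).mulVec v = (M ^ k).mulVec (M.mulVec v) := by
      rw [Matrix.mulVec_mulVec, ← pow_succ]
    rw [key]
    set S := Finset.filter (fun i => v i ≠ 0) Finset.univ with hS
    have hSne : S.Nonempty := by
      rcases Function.ne_iff.mp hv0 with ⟨j, hj⟩
      exact ⟨j, Finset.mem_filter.mpr ⟨Finset.mem_univ j, by simpa using hj⟩⟩
    have hMv : ∀ i, 0 ≤ M.mulVec v i := mulVec_nonneg hM0 hv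
    have hsub : ∀ j ∈ S, M.mulVec v j ≠ 0 := by
      intro j hj
      have hvj : 0 < v j := lt_of_le_of_ne (hv j) (Ne.symm (Finset.mem_filter.mp hj).2)
      have : M j j * v j ≤ M.mulVec v j := by
        rw [Matrix.mulVec, dotProduct]
        exact Finset.single_le_sum (f := fun l => M j l * v l)
          (fun l _ => mul_nonneg (hM0 j l) (hv l)) (Finset.mem_univ j)
      have : 0 < M.mulVec v j := lt_of_lt_of_le (mul_pos (hMd j) hvj) this
      exact ne_of_gt this
    have hsubset : S ⊆ Finset.filter (fun i => M.mulVec v i ≠ 0) Finset.univ := by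
      intro j hj
      exact Finset.mem_filter.mpr ⟨Finset.mem_univ j, hsub j hj⟩
    have hMv0 : M.mulVec v ≠ 0 := by
      obtain ⟨j, hj⟩ := hSne
      intro hcon
      exact hsub j hj (by rw [hcon]; rfl)
    by_cases hSuniv : S = Finset.univ
    · -- all entries of v positive, so all entries of Mv positive
      exact ih (M.mulVec v) hMv hMv0
        (le_trans (by
          have := Finset.card_le_card hsubset
          rw [hSuniv] at this
          simp only [Finset.card_univ, Fintype.card_fin] at this ⊢
          omega) (le_refl _)) i
    · obtain ⟨a, haS, b, hbS, hab⟩ := hedge S hSne hSuniv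
      have haMv : M.mulVec v a ≠ 0 := by
        have hvb : 0 < v b := lt_of_le_of_ne (hv b) (Ne.symm (Finset.mem_filter.mp hbS).2)
        have h1 : M a b * v b ≤ M.mulVec v a := by
          rw [Matrix.mulVec, dotProduct]
          exact Finset.single_le_sum (f := fun l => M a l * v l)
            (fun l _ => mul_nonneg (hM0 a l) (hv l)) (Finset.mem_univ b)
        have : 0 < M a b := lt_of_le_of_ne (hM0 a b) (Ne.symm hab)
        exact ne_of_gt (lt_of_lt_of_le (mul_pos this hvb) h1)
      have hss : S ⊂ Finset.filter (fun i => M.mulVec v i ≠ 0) Finset.univ := by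
        refine Finset.ssubset_iff_of_subset hsubset |>.mpr ⟨a, ?_, haS⟩
        exact Finset.mem_filter.mpr ⟨Finset.mem_univ a, haMv⟩
      have hcard2 := Finset.card_lt_card hss
      exact ih (M.mulVec v) hMv hMv0 (by omega) i

lemma exists_perron {N : ℕ} (hN : 1 ≤ N) (δ : Fin N → ℝ) (hδ : ∀ i, 0 < δ i)
    (B : Matrix (Fin N) (Fin N) ℝ) (hB : ∀ i j, 0 ≤ B i j) (hirr : MatrixIrreducible B) :
    ∃ (u : Fin N → ℝ) (r : ℝ), (∀ i, 0 < u i) ∧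
      (∀ i, (B - Matrix.diagonal δ).mulVec u i = r * u i) ∧
      ((r : ℂ) ∈ spectrum ℂ ((B - Matrix.diagonal δ).map (fun x => (x : ℂ)))) := by
  haveI : NeZero N := ⟨by omega⟩
  have hne : (Finset.univ : Finset (Fin N)).Nonempty := Finset.univ_nonempty
  set A : Matrix (Fin N) (Fin N) ℝ := B - Matrix.diagonal δ with hA
  set c : ℝ := 1 + ∑ i, δ i with hc
  have hcδ : ∀ i, δ i < c := by
    intro i
    have : δ i ≤ ∑ j, δ j :=
      Finset.single_le_sum (f := δ) (fun j _ => (hδ j).le) (Finset.mem_univ i)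
    simp only [hc]; linarith
  set M : Matrix (Fin N) (Fin N) ℝ := A + c • 1 with hM
  have hMapp : ∀ i j, M i j = B i j + (if i = j then c - δ i else 0) := by
    intro i j
    simp only [hM, hA, Matrix.add_apply, Matrix.sub_apply, Matrix.smul_apply,
      Matrix.one_apply, Matrix.diagonal_apply, smul_eq_mul]
    by_cases h : i = j <;> simp [h] <;> ring
  have hM0 : ∀ i j, 0 ≤ M i j := by
    intro i j
    rw [hMapp]
    by_cases h : i = j
    · subst h
      rw [if_pos rfl]
      have := hcδ i; have := hB i i; linarith
    · simp only [if_neg h, add_zero]; exact hB i j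
  have hMd : ∀ i, 0 < M i i := by
    intro i
    rw [hMapp, if_pos rfl]
    have := hcδ i; have := hB i i; linarith
  have hedge : ∀ S : Finset (Fin N), S.Nonempty → S ≠ Finset.univ →
      ∃ i, i ∉ S ∧ ∃ j ∈ S, M i j ≠ 0 := by
    intro S h1 h2
    obtain ⟨i, hi, j, hj, hij⟩ := hirr.rev S h1 h2
    refine ⟨i, hi, j, hj, ?_⟩
    have hij' : i ≠ j := by rintro rfl; exact hi hj
    rw [hMapp]; simp only [if_neg hij', add_zero]; exact hij
  have hPpos : ∀ v : Fin N → ℝ, (∀ i, 0 ≤ v i) → v ≠ 0 →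
      ∀ i, 0 < ((M ^ (N - 1)).mulVec v) i := by
    intro v hv hv0
    refine mulVec_pos_pow hM0 hMd hedge (N - 1) v hv hv0 ?_
    have h3 : (Finset.filter (fun i => v i ≠ 0) Finset.univ).Nonempty := by
      rcases Function.ne_iff.mp hv0 with ⟨j, hj⟩
      exact ⟨j, Finset.mem_filter.mpr ⟨Finset.mem_univ j, by simpa using hj⟩⟩
    have := Finset.card_pos.mpr h3
    omega
  -- the simplex
  set Δ : Set (Fin N → ℝ) := {x | (∀ i, 0 ≤ x i) ∧ ∑ i, x i = 1} with hΔ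
  have hΔ0 : ∀ x ∈ Δ, x ≠ 0 := by
    rintro x ⟨h1, h2⟩ rfl
    simp at h2
  have hΔclosed : IsClosed Δ := by
    have h1 : IsClosed {x : Fin N → ℝ | ∀ i, 0 ≤ x i} := by
      have he : {x : Fin N → ℝ | ∀ i, 0 ≤ x i} = ⋂ i, {x | 0 ≤ x i} := by ext x; simp
      rw [he]
      exact isClosed_iInter fun i => isClosed_le continuous_const (continuous_apply i)
    have h2 : IsClosed {x : Fin N → ℝ | ∑ i, x i = 1} :=
      isClosed_eq (continuous_finset_sum _ fun i _ => continuous_apply i) continuous_const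
    exact h1.inter h2
  have hΔcompact : IsCompact Δ := by
    refine IsCompact.of_isClosed_subset (isCompact_univ_pi fun _ => isCompact_Icc
      (a := (0:ℝ)) (b := 1)) hΔclosed ?_
    intro x hx
    simp only [Set.mem_pi, Set.mem_univ, forall_true_left, Set.mem_Icc]
    intro i
    refine ⟨hx.1 i, ?_⟩
    calc x i ≤ ∑ j, x j :=
          Finset.single_le_sum (fun j _ => hx.1 j) (Finset.mem_univ i)
      _ = 1 := hx.2
  -- the normalized iterate map
  set P : Matrix (Fin N) (Fin N) ℝ := M ^ (N - 1) with hP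
  set T : (Fin N → ℝ) → (Fin N → ℝ) := fun x => (∑ i, P.mulVec x i)⁻¹ • P.mulVec x with hT
  have hσpos : ∀ x ∈ Δ, 0 < ∑ i, P.mulVec x i := by
    intro x hx
    exact Finset.sum_pos (fun i _ => hPpos x hx.1 (hΔ0 x hx) i) hne
  have hTpos : ∀ x ∈ Δ, ∀ i, 0 < T x i := by
    intro x hx i
    simp only [hT, Pi.smul_apply, smul_eq_mul]
    exact mul_pos (inv_pos.mpr (hσpos x hx)) (hPpos x hx.1 (hΔ0 x hx) i)
  have hTΔ : ∀ x ∈ Δ, T x ∈ Δ := by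
    intro x hx
    refine ⟨fun i => (hTpos x hx i).le, ?_⟩
    simp only [hT, Pi.smul_apply, smul_eq_mul, ← Finset.mul_sum]
    exact inv_mul_cancel₀ (hσpos x hx).ne'
  set K : Set (Fin N → ℝ) := T '' Δ with hK
  have hKΔ : K ⊆ Δ := by rintro u ⟨x, hx, rfl⟩; exact hTΔ x hx
  have hKpos : ∀ u ∈ K, ∀ i, 0 < u i := by rintro u ⟨x, hx, rfl⟩; exact hTpos x hx
  have hPcont : Continuous fun x : Fin N → ℝ => P.mulVec x := by
    apply continuous_pi
    intro i
    simp only [Matrix.mulVec, dotProduct]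
    exact continuous_finset_sum _ fun j _ => continuous_const.mul (continuous_apply j)
  have hKcompact : IsCompact K := by
    apply hΔcompact.image_of_continuousOn
    apply ContinuousOn.fun_smul
    · exact ContinuousOn.inv₀
        ((continuous_finset_sum _ fun i _ => (continuous_apply i).comp hPcont).continuousOn)
        (fun x hx => (hσpos x hx).ne')
    · exact hPcont.continuousOn
  have hKne : K.Nonempty := by
    refine ⟨T (fun _ => (N : ℝ)⁻¹), ⟨fun _ => (N : ℝ)⁻¹, ?_, rfl⟩⟩
    constructor
    · intro i; positivity
    · simp only [Finset.sum_const, Finset.card_univ, Fintype.card_fin, nsmul_eq_mul]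
      rw [mul_inv_cancel₀]
      exact Nat.cast_ne_zero.mpr (by omega)
  -- the Collatz–Wielandt function
  set f : (Fin N → ℝ) → ℝ := fun u => Finset.univ.inf' hne fun i => A.mulVec u i / u i with hf
  have hAcont : ∀ i, Continuous fun x : Fin N → ℝ => A.mulVec x i := by
    intro i
    simp only [Matrix.mulVec, dotProduct]
    exact continuous_finset_sum _ fun j _ => continuous_const.mul (continuous_apply j)
  have hfc : ContinuousOn f K := by
    apply ContinuousOn.finset_inf'_apply hne
    intro i _
    exact ContinuousOn.div (hAcont i).continuousOn (continuous_apply i).continuousOn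
      (fun x hx => (hKpos x hx i).ne')
  obtain ⟨u, huK, hmax⟩ := hKcompact.exists_isMaxOn hKne hfc
  set r : ℝ := f u with hr
  have hupos : ∀ i, 0 < u i := hKpos u huK
  have hune : u ≠ 0 := by
    intro hh
    have i1 : Fin N := ⟨0, by omega⟩
    exact (hupos i1).ne' (by rw [hh]; rfl)
  have hAu_ge : ∀ i, r * u i ≤ A.mulVec u i := by
    intro i
    have h1 : r ≤ A.mulVec u i / u i := Finset.inf'_le _ (Finset.mem_univ i)
    calc r * u i ≤ (A.mulVec u i / u i) * u i :=
          mul_le_mul_of_nonneg_right h1 (hupos i).le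
      _ = A.mulVec u i := div_mul_cancel₀ _ (hupos i).ne'
  have heq : ∀ i, A.mulVec u i = r * u i := by
    by_contra hcon
    push_neg at hcon
    obtain ⟨i0, hi0⟩ := hcon
    set z : Fin N → ℝ := fun i => A.mulVec u i - r * u i with hz
    have hz0 : ∀ i, 0 ≤ z i := fun i => by
      simp only [hz]; linarith [hAu_ge i]
    have hzne : z ≠ 0 := by
      intro hcc
      apply hi0
      have h5 := congrFun hcc i0
      simp only [hz, Pi.zero_apply] at h5
      linarith
    have hw := hPpos z hz0 hzne
    have hcomm : A * P = P * A := by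
      have h1 : Commute A M := by
        rw [hM]
        exact (Commute.refl A).add_right (Commute.smul_right (Commute.one_right A) c)
      exact (h1.pow_right (N - 1)).eq
    set v : Fin N → ℝ := P.mulVec u with hv
    have hvpos : ∀ i, 0 < v i := hPpos u (fun i => (hupos i).le) hune
    have hAv : ∀ i, A.mulVec v i = r * v i + P.mulVec z i := by
      have e1 : A.mulVec v = P.mulVec (A.mulVec u) := by
        rw [hv, Matrix.mulVec_mulVec, Matrix.mulVec_mulVec, hcomm]
      have e2 : A.mulVec u = r • u + z := by
        funext i
        simp only [Pi.add_apply, Pi.smul_apply, smul_eq_mul, hz]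
        ring
      intro i
      rw [e1, e2, Matrix.mulVec_add, Matrix.mulVec_smul]
      simp only [Pi.add_apply, Pi.smul_apply, smul_eq_mul, hv]
  -- now evaluate f at T u ∈ K
    have hTuK : T u ∈ K := ⟨u, hKΔ huK, rfl⟩
    have hfTu_le : f (T u) ≤ r := hmax hTuK
    set σ : ℝ := ∑ i, P.mulVec u i with hσ
    have hσp : 0 < σ := hσpos u (hKΔ huK)
    obtain ⟨i, _, hfi⟩ := Finset.exists_mem_eq_inf' hne (fun i => A.mulVec (T u) i / T u i)
    have hTu_eq : T u = σ⁻¹ • v := rfl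
    have hgt : r < f (T u) := by
      have hATu : A.mulVec (T u) i = σ⁻¹ * (r * v i + P.mulVec z i) := by
        rw [hTu_eq, Matrix.mulVec_smul]
        simp only [Pi.smul_apply, smul_eq_mul, hAv i]
      have hTui : T u i = σ⁻¹ * v i := by
        rw [hTu_eq]; simp only [Pi.smul_apply, smul_eq_mul]
      have hfTu : f (T u) = A.mulVec (T u) i / T u i := hfi
      rw [hfTu, hATu, hTui, mul_div_mul_left _ _ (inv_ne_zero hσp.ne'),
        lt_div_iff₀ (hvpos i)]
      have := hw i
      linarith
    linarith
  refine ⟨u, r, hupos, heq, ?_⟩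
  rw [spectrum.mem_iff]
  intro hunit
  rw [Matrix.isUnit_iff_isUnit_det] at hunit
  have hdet : ((algebraMap ℂ (Matrix (Fin N) (Fin N) ℂ)) r
      - A.map (fun x => (x : ℂ))).det = 0 := by
    rw [← Matrix.exists_mulVec_eq_zero_iff]
    refine ⟨fun i => (u i : ℂ), ?_, ?_⟩
    · intro hh
      have i1 : Fin N := ⟨0, by omega⟩
      have h6 := congrFun hh i1
      simp only [Pi.zero_apply, Complex.ofReal_eq_zero] at h6
      exact (hupos i1).ne' h6
    · funext i
      have hs : ∀ j, ((algebraMap ℂ (Matrix (Fin N) (Fin N) ℂ)) r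
          - A.map (fun x => (x : ℂ))) i j
          = (if i = j then (r : ℂ) else 0) - ((A i j : ℝ) : ℂ) := by
        intro j
        simp [Matrix.sub_apply, Matrix.algebraMap_matrix_apply, Matrix.map_apply]
      simp only [Matrix.mulVec, dotProduct, hs, sub_mul, ite_mul, zero_mul]
      rw [Finset.sum_sub_distrib, Finset.sum_ite_eq (Finset.univ) i
        (fun j => (r : ℂ) * (u j : ℂ))]
      simp only [Finset.mem_univ, if_pos, Pi.zero_apply]
      have h7 : ∑ j, ((A i j : ℝ) : ℂ) * ((u j : ℝ) : ℂ) = ((A.mulVec u i : ℝ) : ℂ) := by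
        rw [Matrix.mulVec, dotProduct]
        push_cast
        rfl
      rw [h7, heq i]
      push_cast
      ring
  rw [hdet] at hunit
  simp at hunit

set_option maxHeartbeats 1000000 in
/-- Heterogeneous SIS network model: if every complex eigenvalue of
`B − D` has real part at most `0`, then every solution of
`pᵢ' = −δᵢ pᵢ + Σⱼ β_{ij} pⱼ (1 − pᵢ)` starting in `[0,1]^N` converges to `0`. -/
theorem stmt_8 (N : ℕ) (hN : 1 ≤ N)
    (δ : Fin N → ℝ) (hδ : ∀ i, 0 < δ i)
    (B : Matrix (Fin N) (Fin N) ℝ) (hB : ∀ i j, 0 ≤ B i j)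
    (hirr : MatrixIrreducible B)
    (heig : ∀ μ : ℂ,
      μ ∈ spectrum ℂ ((B - Matrix.diagonal δ).map (fun x => (x : ℂ))) → μ.re ≤ 0)
    (p : ℝ → Fin N → ℝ)
    (h0 : ∀ i, p 0 i ∈ Set.Icc (0 : ℝ) 1)
    (hode : ∀ i, ∀ t : ℝ, 0 ≤ t →
      HasDerivAt (fun s => p s i)
        (-(δ i) * p t i + ∑ j, B i j * p t j * (1 - p t i)) t) :
    Filter.Tendsto p Filter.atTop (nhds 0) := by
  haveI : NeZero N := ⟨by omega⟩
  have hne : (Finset.univ : Finset (Fin N)).Nonempty := Finset.univ_nonempty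
  have hcont : ∀ (i : Fin N) (t : ℝ), 0 ≤ t → ContinuousAt (fun s => p s i) t :=
    fun i t ht => (hode i t ht).continuousAt
  set Sβ : ℝ := ∑ i, ∑ j, B i j with hSβ
  have hSβ0 : 0 ≤ Sβ := Finset.sum_nonneg fun i _ => Finset.sum_nonneg fun j _ => hB i j
  have hrow : ∀ i, ∑ j, B i j ≤ Sβ := by
    intro i
    exact Finset.single_le_sum (f := fun i => ∑ j, B i j)
      (fun i _ => Finset.sum_nonneg fun j _ => hB i j) (Finset.mem_univ i)
  set Λ : ℝ := 1 + 2 * Sβ with hΛ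
  have hΛ1 : 1 ≤ Λ := by simp only [hΛ]; linarith
  clear_value Sβ Λ
  -- ==================== STEP 1 : invariance of [0,1]^N ====================
  have key : ∀ T : ℝ, 0 ≤ T → ∀ ε : ℝ, 0 < ε → ε * Real.exp (Λ * T) ≤ 1 →
      ∀ t, 0 ≤ t → t ≤ T → ∀ i,
        -(ε * Real.exp (Λ * t)) < p t i ∧ p t i < 1 + ε * Real.exp (Λ * t) := by
    intro T hT ε hε hεT
    by_contra hcon
    push_neg at hcon
    -- the set of "bad" times is nonempty and closed
    set S : Set ℝ := ⋃ i : Fin N,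
      ({t | t ∈ Set.Icc 0 T ∧ p t i + ε * Real.exp (Λ * t) ≤ 0} ∪
       {t | t ∈ Set.Icc 0 T ∧ 1 + ε * Real.exp (Λ * t) - p t i ≤ 0}) with hS
    have hexp_cont : Continuous fun t : ℝ => ε * Real.exp (Λ * t) := by
      exact continuous_const.mul ((Real.continuous_exp).comp (continuous_const.mul continuous_id))
    have hScl : IsClosed S := by
      apply isClosed_iUnion_of_finite
      intro i
      apply IsClosed.union
      · exact isClosed_sep_le isClosed_Icc (fun x hx =>
          ((hcont i x hx.1).add (hexp_cont.continuousAt)))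
      · exact isClosed_sep_le isClosed_Icc (fun x hx =>
          ((continuous_const.continuousAt).add (hexp_cont.continuousAt)).sub (hcont i x hx.1))
    have hSne : S.Nonempty := by
      obtain ⟨t, ht0, htT, i, hi⟩ := hcon
      refine ⟨t, Set.mem_iUnion.mpr ⟨i, ?_⟩⟩
      by_cases h : -(ε * Real.exp (Λ * t)) < p t i
      · exact Or.inr ⟨⟨ht0, htT⟩, by linarith [hi h]⟩
      · exact Or.inl ⟨⟨ht0, htT⟩, by linarith [not_lt.mp h]⟩
    have hSbdd : BddBelow S := ⟨0, by
      rintro t ht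
      simp only [hS, Set.mem_iUnion, Set.mem_union] at ht
      obtain ⟨i, h | h⟩ := ht <;> exact h.1.1⟩
    set t₀ : ℝ := sInf S with ht₀
    have ht₀S : t₀ ∈ S := hScl.csInf_mem hSne hSbdd
    have ht₀Icc : t₀ ∈ Set.Icc 0 T := by
      simp only [hS, Set.mem_iUnion, Set.mem_union] at ht₀S
      obtain ⟨i, h | h⟩ := ht₀S <;> exact h.1
    have ht₀pos : 0 < t₀ := by
      rcases lt_or_eq_of_le ht₀Icc.1 with h | h
      · exact h
      · exfalso
        simp only [hS, Set.mem_iUnion, Set.mem_union] at ht₀S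
        obtain ⟨i, hcase | hcase⟩ := ht₀S
        · have := hcase.2
          rw [← h] at this
          simp only [mul_zero, Real.exp_zero, mul_one] at this
          have := (h0 i).1
          linarith
        · have := hcase.2
          rw [← h] at this
          simp only [mul_zero, Real.exp_zero, mul_one] at this
          have := (h0 i).2
          linarith
    have hbefore : ∀ t, 0 ≤ t → t < t₀ → ∀ j,
        -(ε * Real.exp (Λ * t)) < p t j ∧ p t j < 1 + ε * Real.exp (Λ * t) := by
      intro t ht htlt j
      have htS : t ∉ S := notMem_of_lt_csInf htlt hSbdd
      constructor
      · by_contra hcc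
        push_neg at hcc
        exact htS (Set.mem_iUnion.mpr ⟨j, Or.inl ⟨⟨ht, le_trans htlt.le ht₀Icc.2⟩,
          by linarith⟩⟩)
      · by_contra hcc
        push_neg at hcc
        exact htS (Set.mem_iUnion.mpr ⟨j, Or.inr ⟨⟨ht, le_trans htlt.le ht₀Icc.2⟩,
          by linarith⟩⟩)
    -- limits from the left give the closed bounds at t₀
    have hat : ∀ j, -(ε * Real.exp (Λ * t₀)) ≤ p t₀ j ∧
        p t₀ j ≤ 1 + ε * Real.exp (Λ * t₀) := by
      intro j
      have hct : ContinuousAt (fun t => p t j + ε * Real.exp (Λ * t)) t₀ :=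
        (hcont j t₀ ht₀Icc.1).add hexp_cont.continuousAt
      have hct2 : ContinuousAt (fun t => 1 + ε * Real.exp (Λ * t) - p t j) t₀ :=
        (continuous_const.continuousAt.add hexp_cont.continuousAt).sub (hcont j t₀ ht₀Icc.1)
      have hmem : Set.Ioo 0 t₀ ∈ nhdsWithin t₀ (Set.Iio t₀) :=
        Ioo_mem_nhdsLT_of_mem ⟨ht₀pos, le_refl _⟩
      constructor
      · have h1 : Filter.Tendsto (fun t => p t j + ε * Real.exp (Λ * t))
            (nhdsWithin t₀ (Set.Iio t₀)) (nhds (p t₀ j + ε * Real.exp (Λ * t₀))) :=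
          hct.continuousWithinAt.tendsto
        have h2 : 0 ≤ p t₀ j + ε * Real.exp (Λ * t₀) := by
          refine ge_of_tendsto h1 ?_
          filter_upwards [hmem] with t ht
          have := (hbefore t ht.1.le ht.2 j).1
          linarith
        linarith
      · have h1 : Filter.Tendsto (fun t => 1 + ε * Real.exp (Λ * t) - p t j)
            (nhdsWithin t₀ (Set.Iio t₀)) (nhds (1 + ε * Real.exp (Λ * t₀) - p t₀ j)) :=
          hct2.continuousWithinAt.tendsto
        have h2 : 0 ≤ 1 + ε * Real.exp (Λ * t₀) - p t₀ j := by
          refine ge_of_tendsto h1 ?_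
          filter_upwards [hmem] with t ht
          have := (hbefore t ht.1.le ht.2 j).2
          linarith
        linarith
    set E : ℝ := Real.exp (Λ * t₀) with hE
    have hE1 : 1 ≤ E := by
      rw [hE, ← Real.exp_zero]
      exact Real.exp_le_exp.mpr (by nlinarith [ht₀pos.le, ht₀Icc.2])
    have hεE1 : ε * E ≤ 1 := by
      have : E ≤ Real.exp (Λ * T) := Real.exp_le_exp.mpr (by nlinarith [ht₀Icc.2])
      nlinarith
    have hεE0 : 0 < ε * E := mul_pos hε (by linarith)
    -- the derivative of the barrier
    have hbar : HasDerivAt (fun t : ℝ => ε * Real.exp (Λ * t)) (ε * (Real.exp (Λ * t₀) * Λ)) t₀ := by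
      have h1 : HasDerivAt (fun t : ℝ => Λ * t) Λ t₀ := by
        simpa using (hasDerivAt_id t₀).const_mul Λ
      exact ((Real.hasDerivAt_exp (Λ * t₀)).comp t₀ h1).const_mul ε
    rw [← hE] at hbar
    -- extract the bad index
    simp only [hS, Set.mem_iUnion, Set.mem_union] at ht₀S
    obtain ⟨i, hcase | hcase⟩ := ht₀S
    all_goals clear_value t₀ E
    all_goals clear hScl hSne hSbdd hcon
    · -- lower crossing : p t₀ i = -(ε E)
      have hc2 : p t₀ i + ε * E ≤ 0 := by rw [hE]; exact hcase.2
      have pe : p t₀ i = -(ε * E) := le_antisymm (by linarith) (hat i).1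
      have hg : HasDerivAt (fun t => p t i + ε * Real.exp (Λ * t))
          ((-(δ i) * p t₀ i + ∑ j, B i j * p t₀ j * (1 - p t₀ i)) + ε * (E * Λ)) t₀ :=
        (hode i t₀ ht₀Icc.1).add hbar
      have hdle : (-(δ i) * p t₀ i + ∑ j, B i j * p t₀ j * (1 - p t₀ i)) + ε * (E * Λ) ≤ 0 := by
        refine deriv_nonpos_of_left_ge hg ht₀pos ?_
        intro t ht1 ht2
        have h3 := (hbefore t ht1 ht2 i).1
        show p t₀ i + ε * Real.exp (Λ * t₀) ≤ p t i + ε * Real.exp (Λ * t)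
        rw [← hE, pe]
        linarith
      -- but the vector field points inwards
      have hsum : ∀ j, (-(ε * E * 2)) * B i j ≤ B i j * p t₀ j * (1 - p t₀ i) := by
        intro j
        have h5 := (hat j).1
        have h6 : 1 - p t₀ i = 1 + ε * E := by rw [pe]; ring
        rw [h6]
        have k1 : B i j * (-(ε * E)) ≤ B i j * p t₀ j := mul_le_mul_of_nonneg_left h5 (hB i j)
        have k2 : (B i j * (-(ε * E))) * (1 + ε * E) ≤ (B i j * p t₀ j) * (1 + ε * E) :=
          mul_le_mul_of_nonneg_right k1 (by linarith)
        nlinarith [k2, mul_nonneg (hB i j) hεE0.le, hεE1, hεE0, hB i j]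
      have hsum2 : (-(ε * E * 2)) * (∑ j, B i j) ≤ ∑ j, B i j * p t₀ j * (1 - p t₀ i) := by
        rw [Finset.mul_sum]
        exact Finset.sum_le_sum fun j _ => hsum j
      have : 0 < (-(δ i) * p t₀ i + ∑ j, B i j * p t₀ j * (1 - p t₀ i)) + ε * (E * Λ) := by
        have h7 : -(δ i) * p t₀ i = δ i * (ε * E) := by rw [pe]; ring
        have h8 : 2 * (∑ j, B i j) * (ε * E) ≤ 2 * Sβ * (ε * E) := by
          nlinarith [hrow i, hεE0]
        have h9 : ε * (E * Λ) = (1 + 2 * Sβ) * (ε * E) := by rw [hΛ]; ring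
        have h10 : 0 ≤ δ i * (ε * E) := mul_nonneg (hδ i).le hεE0.le
        linarith [hsum2, h8, h9, h10, hεE0, mul_nonneg hSβ0 hεE0.le]
      linarith
    · -- upper crossing : p t₀ i = 1 + ε E
      have hc2 : 1 + ε * E - p t₀ i ≤ 0 := by rw [hE]; exact hcase.2
      have pe : p t₀ i = 1 + ε * E := le_antisymm (hat i).2 (by linarith)
      have hg : HasDerivAt (fun t => p t i - (1 + ε * Real.exp (Λ * t)))
          ((-(δ i) * p t₀ i + ∑ j, B i j * p t₀ j * (1 - p t₀ i)) - ε * (E * Λ)) t₀ := by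
        have := (hode i t₀ ht₀Icc.1).sub (hbar.const_add 1)
        exact this
      have hdge : 0 ≤ (-(δ i) * p t₀ i + ∑ j, B i j * p t₀ j * (1 - p t₀ i)) - ε * (E * Λ) := by
        refine deriv_nonneg_of_left_le hg ht₀pos ?_
        intro t ht1 ht2
        have h3 := (hbefore t ht1 ht2 i).2
        show p t i - (1 + ε * Real.exp (Λ * t)) ≤ p t₀ i - (1 + ε * Real.exp (Λ * t₀))
        rw [← hE, pe]
        linarith
      have hsum : ∀ j, B i j * p t₀ j * (1 - p t₀ i) ≤ (ε * E) * B i j := by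
        intro j
        have h5 := (hat j).1
        have h6 : 1 - p t₀ i = -(ε * E) := by rw [pe]; ring
        rw [h6]
        have k1 : -(p t₀ j) ≤ ε * E := by linarith
        have k2 : ε * E * (-(p t₀ j)) ≤ ε * E * (ε * E) :=
          mul_le_mul_of_nonneg_left k1 hεE0.le
        have k3 : ε * E * (ε * E) ≤ ε * E := by nlinarith [hεE1, hεE0.le]
        have k4 := mul_le_mul_of_nonneg_left (le_trans k2 k3) (hB i j)
        nlinarith [k4]
      have hsum2 : ∑ j, B i j * p t₀ j * (1 - p t₀ i) ≤ (ε * E) * (∑ j, B i j) := by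
        rw [Finset.mul_sum]
        exact Finset.sum_le_sum fun j _ => hsum j
      have : (-(δ i) * p t₀ i + ∑ j, B i j * p t₀ j * (1 - p t₀ i)) - ε * (E * Λ) < 0 := by
        have h7 : -(δ i) * p t₀ i < 0 := by rw [pe]; nlinarith [hδ i, hεE0]
        have h8 : (∑ j, B i j) * (ε * E) ≤ Sβ * (ε * E) := by nlinarith [hrow i, hεE0]
        have h9 : ε * (E * Λ) = (1 + 2 * Sβ) * (ε * E) := by rw [hΛ]; ring
        linarith [h7, hsum2, h8, h9, mul_nonneg hSβ0 hεE0.le, hεE0]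
      linarith
  -- invariance proper
  have hinv : ∀ t, 0 ≤ t → ∀ i, 0 ≤ p t i ∧ p t i ≤ 1 := by
    intro t ht i
    constructor
    · by_contra hcc
      push_neg at hcc
      set ε : ℝ := min (Real.exp (-(Λ * t))) ((-(p t i)) / (2 * Real.exp (Λ * t))) with hε
      have hexp : 0 < Real.exp (Λ * t) := Real.exp_pos _
      have hεpos : 0 < ε := lt_min (Real.exp_pos _) (div_pos (by linarith) (by positivity))
      have hεT : ε * Real.exp (Λ * t) ≤ 1 := by
        have : ε ≤ Real.exp (-(Λ * t)) := min_le_left _ _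
        calc ε * Real.exp (Λ * t) ≤ Real.exp (-(Λ * t)) * Real.exp (Λ * t) :=
              mul_le_mul_of_nonneg_right this hexp.le
          _ = 1 := by rw [← Real.exp_add]; simp
      have h2 : ε ≤ (-(p t i)) / (2 * Real.exp (Λ * t)) := min_le_right _ _
      clear_value ε
      have hk := (key t ht ε hεpos hεT t ht le_rfl i).1
      have h3 : ε * Real.exp (Λ * t) ≤ (-(p t i)) / 2 := by
        rw [le_div_iff₀ (by positivity)] at h2
        linarith
      linarith
    · by_contra hcc
      push_neg at hcc
      set ε : ℝ := min (Real.exp (-(Λ * t))) ((p t i - 1) / (2 * Real.exp (Λ * t))) with hε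
      have hexp : 0 < Real.exp (Λ * t) := Real.exp_pos _
      have hεpos : 0 < ε := lt_min (Real.exp_pos _) (div_pos (by linarith) (by positivity))
      have hεT : ε * Real.exp (Λ * t) ≤ 1 := by
        have : ε ≤ Real.exp (-(Λ * t)) := min_le_left _ _
        calc ε * Real.exp (Λ * t) ≤ Real.exp (-(Λ * t)) * Real.exp (Λ * t) :=
              mul_le_mul_of_nonneg_right this hexp.le
          _ = 1 := by rw [← Real.exp_add]; simp
      have h2 : ε ≤ (p t i - 1) / (2 * Real.exp (Λ * t)) := min_le_right _ _
      clear_value ε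
      have hk := (key t ht ε hεpos hεT t ht le_rfl i).2
      have h3 : ε * Real.exp (Λ * t) ≤ (p t i - 1) / 2 := by
        rw [le_div_iff₀ (by positivity)] at h2
        linarith
      linarith
  -- ==================== STEP 2 : Perron eigenvector ====================
  obtain ⟨u, r, hupos, hu, hrspec⟩ := exists_perron hN δ hδ B hB hirr
  have hr0 : r ≤ 0 := by simpa using heig (r : ℂ) hrspec
  have hBu : ∀ i, ∑ j, B i j * u j = (r + δ i) * u i := by
    intro i
    have h1 := hu i
    rw [Matrix.sub_mulVec] at h1
    have h2 : (Matrix.diagonal δ).mulVec u i = δ i * u i := by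
      simp [Matrix.mulVec_diagonal]
    have h3 : B.mulVec u i = ∑ j, B i j * u j := rfl
    simp only [Pi.sub_apply] at h1
    rw [h2, h3] at h1
    linarith
  have hrδ : ∀ i, 0 ≤ r + δ i := by
    intro i
    have h5 : 0 ≤ ∑ j, B i j * u j :=
      Finset.sum_nonneg fun j _ => mul_nonneg (hB i j) (hupos j).le
    rw [hBu i] at h5
    nlinarith [hupos i]
  -- ==================== STEP 3 : the decaying barrier ====================
  have hc0 : ∀ i, Finset.univ.inf' hne (fun i => δ i * u i) ≤ δ i * u i :=
    fun i => Finset.inf'_le _ (Finset.mem_univ i)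
  set c0 : ℝ := Finset.univ.inf' hne (fun i => δ i * u i) with hc0def
  have hc0pos : 0 < c0 := by
    obtain ⟨i, _, hi⟩ := Finset.exists_mem_eq_inf' hne (fun i => δ i * u i)
    rw [hc0def, hi]
    exact mul_pos (hδ i) (hupos i)
  set K0 : ℝ := Finset.univ.sup' hne (fun i => (u i)⁻¹) with hK0def
  have hK0 : ∀ i, (u i)⁻¹ ≤ K0 := fun i => Finset.le_sup' (fun j => (u j)⁻¹) (Finset.mem_univ i)
  have hK0pos : 0 < K0 := lt_of_lt_of_le (inv_pos.mpr (hupos ⟨0, by omega⟩)) (hK0 _)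
  have hK0u : ∀ i, 1 ≤ K0 * u i := by
    intro i
    calc 1 = (u i)⁻¹ * u i := (inv_mul_cancel₀ (hupos i).ne').symm
      _ ≤ K0 * u i := mul_le_mul_of_nonneg_right (hK0 i) (hupos i).le
  set a : ℝ := c0 * K0 with hadef
  have hapos : 0 < a := mul_pos hc0pos hK0pos
  set y : ℝ → ℝ := fun t => 2 * K0 / (1 + a * t) with hy
  have hden : ∀ t : ℝ, 0 ≤ t → 0 < 1 + a * t := fun t ht => by nlinarith
  have hypos : ∀ t, 0 ≤ t → 0 < y t := fun t ht => div_pos (by linarith) (hden t ht)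
  have hycont : ∀ t : ℝ, 0 ≤ t → ContinuousAt y t := by
    intro t ht
    exact ContinuousAt.div continuousAt_const (by fun_prop) (hden t ht).ne'
  have hyderiv : ∀ t : ℝ, 0 ≤ t →
      HasDerivAt y (-(2 * K0 * a) / (1 + a * t) ^ 2) t := by
    intro t ht
    have h1 : HasDerivAt (fun s : ℝ => 1 + a * s) a t := by
      simpa using ((hasDerivAt_id t).const_mul a).const_add 1
    have h2 := (hasDerivAt_const t (2 * K0)).div h1 (hden t ht).ne'
    convert h2 using 1
    · rfl
    · rfl
    · rfl
    ring
  have hy0 : y 0 = 2 * K0 := by rw [hy]; simp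
  have claim : ∀ t, 0 ≤ t → ∀ i, p t i < u i * y t := by
    by_contra hcon
    push_neg at hcon
    set S : Set ℝ := ⋃ i : Fin N, {t | t ∈ Set.Ici (0:ℝ) ∧ u i * y t - p t i ≤ 0} with hS
    have hScl : IsClosed S := by
      apply isClosed_iUnion_of_finite
      intro i
      exact isClosed_sep_le isClosed_Ici
        (fun x hx => ((continuousAt_const.mul (hycont x hx)).sub (hcont i x hx)))
    have hSne : S.Nonempty := by
      obtain ⟨t, ht, i, hi⟩ := hcon
      exact ⟨t, Set.mem_iUnion.mpr ⟨i, ⟨ht, by linarith⟩⟩⟩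
    have hSbdd : BddBelow S := ⟨0, by
      rintro t ht
      simp only [hS, Set.mem_iUnion] at ht
      obtain ⟨i, h⟩ := ht
      exact h.1⟩
    set t₀ : ℝ := sInf S with ht₀def
    have ht₀S : t₀ ∈ S := hScl.csInf_mem hSne hSbdd
    have ht₀0 : 0 ≤ t₀ := by
      simp only [hS, Set.mem_iUnion] at ht₀S
      obtain ⟨i, h⟩ := ht₀S; exact h.1
    have ht₀pos : 0 < t₀ := by
      rcases lt_or_eq_of_le ht₀0 with h | h
      · exact h
      exfalso
      simp only [hS, Set.mem_iUnion] at ht₀S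
      obtain ⟨i, hcc⟩ := ht₀S
      have h2 := hcc.2
      rw [← h, hy0] at h2
      have h4 := (h0 i).2
      have h5 := hK0u i
      nlinarith
    have hbefore : ∀ t, 0 ≤ t → t < t₀ → ∀ j, p t j < u j * y t := by
      intro t ht htlt j
      have htS : t ∉ S := notMem_of_lt_csInf htlt hSbdd
      by_contra hcc
      push_neg at hcc
      exact htS (Set.mem_iUnion.mpr ⟨j, ⟨ht, by linarith⟩⟩)
    have hat : ∀ j, p t₀ j ≤ u j * y t₀ := by
      intro j
      have hct : ContinuousAt (fun t => u j * y t - p t j) t₀ :=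
        (continuousAt_const.mul (hycont t₀ ht₀0)).sub (hcont j t₀ ht₀0)
      have h1 : Filter.Tendsto (fun t => u j * y t - p t j) (nhdsWithin t₀ (Set.Iio t₀))
          (nhds (u j * y t₀ - p t₀ j)) := hct.continuousWithinAt.tendsto
      have h2 : 0 ≤ u j * y t₀ - p t₀ j := by
        refine ge_of_tendsto h1 ?_
        filter_upwards [Ioo_mem_nhdsLT_of_mem ⟨ht₀pos, le_refl t₀⟩] with s hs
        have := hbefore s hs.1.le hs.2 j
        linarith
      linarith
    simp only [hS, Set.mem_iUnion] at ht₀S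
    obtain ⟨i, hcc⟩ := ht₀S
    have hmpos : 0 < y t₀ := hypos t₀ ht₀0
    have pe : p t₀ i = u i * y t₀ := le_antisymm (hat i) (by have := hcc.2; linarith)
    have hg : HasDerivAt (fun t => p t i - u i * y t)
        ((-(δ i) * p t₀ i + ∑ j, B i j * p t₀ j * (1 - p t₀ i))
          - u i * (-(2 * K0 * a) / (1 + a * t₀) ^ 2)) t₀ :=
      (hode i t₀ ht₀0).sub ((hyderiv t₀ ht₀0).const_mul (u i))
    have hd0 : 0 ≤ (-(δ i) * p t₀ i + ∑ j, B i j * p t₀ j * (1 - p t₀ i))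
          - u i * (-(2 * K0 * a) / (1 + a * t₀) ^ 2) := by
      refine deriv_nonneg_of_left_le hg ht₀pos ?_
      intro t ht1 ht2
      have h3 := hbefore t ht1 ht2 i
      show p t i - u i * y t ≤ p t₀ i - u i * y t₀
      rw [pe]
      linarith
    have hp1 : p t₀ i ≤ 1 := (hinv t₀ ht₀0 i).2
    have h1m : 0 ≤ 1 - u i * y t₀ := by rw [← pe]; linarith
    have hsum1 : ∑ j, B i j * p t₀ j ≤ (r + δ i) * u i * y t₀ := by
      calc ∑ j, B i j * p t₀ j ≤ ∑ j, B i j * (u j * y t₀) := by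
            refine Finset.sum_le_sum fun j _ => ?_
            exact mul_le_mul_of_nonneg_left (hat j) (hB i j)
        _ = (∑ j, B i j * u j) * y t₀ := by
            rw [Finset.sum_mul]
            exact Finset.sum_congr rfl fun j _ => by ring
        _ = (r + δ i) * u i * y t₀ := by rw [hBu i]
    have hfield : (-(δ i) * p t₀ i + ∑ j, B i j * p t₀ j * (1 - p t₀ i))
        ≤ -(δ i * (u i * y t₀) ^ 2) := by
      have e1 : ∑ j, B i j * p t₀ j * (1 - p t₀ i)
          = (∑ j, B i j * p t₀ j) * (1 - p t₀ i) := by rw [Finset.sum_mul]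
      rw [e1, pe]
      have e2 : (∑ j, B i j * p t₀ j) * (1 - u i * y t₀)
          ≤ ((r + δ i) * u i * y t₀) * (1 - u i * y t₀) :=
        mul_le_mul_of_nonneg_right hsum1 h1m
      nlinarith [hr0, hmpos, hupos i, h1m, mul_nonneg (mul_nonneg (hupos i).le hmpos.le) h1m,
        hδ i, mul_nonneg (hupos i).le hmpos.le]
    have hyd : u i * (-(2 * K0 * a) / (1 + a * t₀) ^ 2)
        = -(u i * (c0 / 2) * (y t₀) ^ 2) := by
      have hyt : y t₀ = 2 * K0 / (1 + a * t₀) := rfl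
      rw [hyt, hadef]
      have hd := (hden t₀ ht₀0).ne'
      field_simp
    have hlast : (-(δ i) * p t₀ i + ∑ j, B i j * p t₀ j * (1 - p t₀ i))
          - u i * (-(2 * K0 * a) / (1 + a * t₀) ^ 2) < 0 := by
      rw [hyd]
      have h6 := hc0 i
      nlinarith [hfield, hmpos, hupos i, hδ i, hc0pos,
        mul_pos (mul_pos (hupos i) hmpos) hmpos,
        mul_pos (mul_pos (hupos i) (hupos i)) (mul_pos hmpos hmpos)]
    linarith
  -- ==================== conclusion ====================
  rw [tendsto_pi_nhds]
  intro i
  simp only [Pi.zero_apply]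
  have hupper : Filter.Tendsto (fun t => u i * y t) Filter.atTop (nhds 0) := by
    have h1 : Filter.Tendsto (fun t : ℝ => 1 + a * t) Filter.atTop Filter.atTop := by
      apply Filter.tendsto_atTop_add_const_left
      exact Filter.Tendsto.const_mul_atTop hapos Filter.tendsto_id
    have h2 : Filter.Tendsto y Filter.atTop (nhds 0) :=
      Filter.Tendsto.div_atTop tendsto_const_nhds h1
    have h3 := h2.const_mul (u i)
    simpa using h3
  refine tendsto_of_tendsto_of_tendsto_of_le_of_le' tendsto_const_nhds hupper ?_ ?_
  · filter_upwards [Filter.eventually_ge_atTop 0] with t ht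
    exact (hinv t ht i).1
  · filter_upwards [Filter.eventually_ge_atTop 0] with t ht
    exact (claim t ht i).le
end

section
/- Let N ≥ 1, let D = diag(δ₁,…,δ_N) with δᵢ > 0, and let B = (β_{ij}) be a nonnegative irreducible matrix. If B − D has a real eigenvalue λ > 0 (equivalently, λ_max(B − D) > 0), then there exists p** ∈ (0,1)^N with δᵢ pᵢ** = Σ_{j=1}^N β_{ij} p_j**(1 − pᵢ**) for all i, such that every differentiable p : [0,∞) → ℝ^N with p(0) ∈ [0,1]^N, p(0) ≠ 0, satisfying pᵢ'(t) = −δᵢ pᵢ(t) + Σ_{j=1}^N β_{ij} p_j(t)(1 − pᵢ(t)) for all i and all t ≥ 0, converges to p** as t → ∞. -/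
open Filter Set

set_option maxHeartbeats 1000000


/-- First-crossing strict invariance lemma: if finitely many functions start positive and
have strictly positive derivative whenever they touch zero while all are nonnegative,
they stay positive. -/
lemma barrier_lemma {ι : Type*} [Fintype ι] (a b : ℝ) (w d : ι → ℝ → ℝ)
    (hw : ∀ k t, a ≤ t → HasDerivAt (w k) (d k t) t)
    (h0 : ∀ k, 0 < w k a)
    (hstep : ∀ t, a ≤ t → t ≤ b → (∀ j, 0 ≤ w j t) → ∀ k, w k t = 0 → 0 < d k t) :
    ∀ t, a ≤ t → t ≤ b → ∀ k, 0 < w k t := by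
  by_contra hcon
  push_neg at hcon
  obtain ⟨t₀, ha₀, hb₀, k₀, hk₀⟩ := hcon
  set E : Set ℝ := ⋃ k, (Icc a b ∩ (w k) ⁻¹' Iic 0) with hE
  have hcont : ∀ k, ContinuousOn (w k) (Icc a b) := fun k =>
    fun t ht => ((hw k t ht.1).continuousAt).continuousWithinAt
  have hEclosed : IsClosed E := by
    refine isClosed_iUnion_of_finite fun k => ?_
    exact (hcont k).preimage_isClosed_of_isClosed isClosed_Icc isClosed_Iic
  have hEne : E.Nonempty := ⟨t₀, mem_iUnion.2 ⟨k₀, ⟨⟨ha₀, hb₀⟩, hk₀⟩⟩⟩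
  have hEbdd : BddBelow E := ⟨a, fun t ht => by
    obtain ⟨k, hk⟩ := mem_iUnion.1 ht; exact hk.1.1⟩
  set τ := sInf E with hτ
  have hτE : τ ∈ E := hEclosed.csInf_mem hEne hEbdd
  obtain ⟨k, hk⟩ := mem_iUnion.1 hτE
  have hτab : τ ∈ Icc a b := hk.1
  have hwk0 : w k τ ≤ 0 := hk.2
  have haτ : a < τ := by
    rcases lt_or_eq_of_le hτab.1 with h | h
    · exact h
    · exact absurd hwk0 (by rw [← h]; exact not_le.2 (h0 k))
  have hpos : ∀ t ∈ Ico a τ, ∀ j, 0 < w j t := by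
    intro t ht j
    by_contra hle
    push_neg at hle
    have : t ∈ E := mem_iUnion.2 ⟨j, ⟨⟨ht.1, le_trans ht.2.le hτab.2⟩, hle⟩⟩
    exact absurd (csInf_le hEbdd this) (not_le.2 ht.2)
  have hge : ∀ j, 0 ≤ w j τ := by
    intro j
    have htend : Tendsto (w j) (nhdsWithin τ (Iio τ)) (nhds (w j τ)) :=
      ((hw j τ hτab.1).continuousAt).continuousWithinAt.tendsto
    refine ge_of_tendsto htend ?_
    filter_upwards [Ioo_mem_nhdsLT_of_mem (⟨haτ, le_refl τ⟩ : τ ∈ Ioc a τ)] with t ht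
    exact (hpos t ⟨ht.1.le, ht.2⟩ j).le
  have hwk : w k τ = 0 := le_antisymm hwk0 (hge k)
  have hd : 0 < d k τ := hstep τ hτab.1 hτab.2 hge k hwk
  -- derivative from the left is ≤ 0
  have hslope : Tendsto (slope (w k) τ) (nhdsWithin τ {τ}ᶜ) (nhds (d k τ)) :=
    hasDerivAt_iff_tendsto_slope.1 (hw k τ hτab.1)
  have hslope' : Tendsto (slope (w k) τ) (nhdsWithin τ (Iio τ)) (nhds (d k τ)) :=
    hslope.mono_left (nhdsWithin_mono τ (fun t ht => ne_of_lt ht))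
  have : d k τ ≤ 0 := by
    refine le_of_tendsto hslope' ?_
    filter_upwards [Ioo_mem_nhdsLT_of_mem (⟨haτ, le_refl τ⟩ : τ ∈ Ioc a τ)] with t ht
    have h1 : 0 < w k t := hpos t ⟨ht.1.le, ht.2⟩ k
    have h2 : t - τ < 0 := sub_neg.2 ht.2
    rw [slope_def_field, hwk, sub_zero]
    exact div_nonpos_of_nonneg_of_nonpos h1.le h2.le
  exact absurd hd (not_lt.2 this)


lemma equilibrium_exists (N : ℕ) (hN : 1 ≤ N)
    (δ : Fin N → ℝ) (hδ : ∀ i, 0 < δ i)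
    (B : Matrix (Fin N) (Fin N) ℝ) (hB : ∀ i j, 0 ≤ B i j)
    (hirr : MatrixIrreducible B)
    (heig : ∃ lam : ℝ, 0 < lam ∧ lam ∈ spectrum ℝ (B - Matrix.diagonal δ)) :
    ∃ pss : Fin N → ℝ, (∀ i, 0 < pss i ∧ pss i < 1) ∧
      (∀ i, δ i * pss i = (∑ j, B i j * pss j) * (1 - pss i)) := by
  classical
  obtain ⟨lam, hlam, hspec⟩ := heig
  -- extract a real eigenvector
  have hspec' : lam ∈ spectrum ℝ (Matrix.toLinAlgEquiv' (B - Matrix.diagonal δ)) := by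
    rwa [AlgEquiv.spectrum_eq]
  have heigv : Module.End.HasEigenvalue (Matrix.toLinAlgEquiv' (B - Matrix.diagonal δ) :
      Module.End ℝ (Fin N → ℝ)) lam := by
    rwa [Module.End.hasEigenvalue_iff_mem_spectrum]
  obtain ⟨v, hv⟩ := heigv.exists_hasEigenvector
  have hv0 : v ≠ 0 := hv.right
  have hvec : ∀ i, ∑ j, B i j * v j = (lam + δ i) * v i := by
    intro i
    have := hv.apply_eq_smul
    have h1 : Matrix.toLinAlgEquiv' (B - Matrix.diagonal δ) v = (B - Matrix.diagonal δ).mulVec v := rfl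
    rw [h1] at this
    have h2 : (B - Matrix.diagonal δ).mulVec v i = (lam • v) i := by rw [this]
    simp only [Matrix.sub_mulVec, Matrix.mulVec, dotProduct, Pi.sub_apply,
      Pi.smul_apply, smul_eq_mul] at h2
    simp only [Matrix.sub_apply, sub_mul] at h2
    rw [Finset.sum_sub_distrib] at h2
    have h3 : ∑ j, Matrix.diagonal δ i j * v j = δ i * v i := by
      rw [Finset.sum_eq_single i]
      · simp [Matrix.diagonal]
      · intro j _ hj; simp [Matrix.diagonal_apply_ne' _ hj]
      · simp
    rw [h3] at h2
    linarith [h2]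
  set u : Fin N → ℝ := fun i => |v i| with hu
  have hu0 : ∀ i, 0 ≤ u i := fun i => abs_nonneg _
  have hkey : ∀ i, (lam + δ i) * u i ≤ ∑ j, B i j * u j := by
    intro i
    have h1 : (lam + δ i) * u i = |(lam + δ i) * v i| := by
      rw [abs_mul, abs_of_pos (by linarith [hδ i])]
    rw [h1, ← hvec i]
    calc |∑ j, B i j * v j| ≤ ∑ j, |B i j * v j| := Finset.abs_sum_le_sum_abs _ _
      _ = ∑ j, B i j * u j := by
          refine Finset.sum_congr rfl fun j _ => ?_
          rw [abs_mul, abs_of_nonneg (hB i j)]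
  obtain ⟨j₀, hj₀⟩ : ∃ j, u j > 0 := by
    by_contra hcon
    push_neg at hcon
    exact hv0 (funext fun i => abs_eq_zero.1 (le_antisymm (hcon i) (hu0 i)))
  -- choose η
  set K : ℝ := 1 + ∑ i, ((∑ j, B i j * u j) + u i) with hK
  have hK1 : 1 ≤ K := by
    have : 0 ≤ ∑ i, ((∑ j, B i j * u j) + u i) :=
      Finset.sum_nonneg fun i _ => add_nonneg
        (Finset.sum_nonneg fun j _ => mul_nonneg (hB i j) (hu0 j)) (hu0 i)
    linarith
  have hKB : ∀ i, (∑ j, B i j * u j) ≤ K := by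
    intro i
    have h1 : (∑ j, B i j * u j) + u i ≤ ∑ i, ((∑ j, B i j * u j) + u i) :=
      Finset.single_le_sum (f := fun i => (∑ j, B i j * u j) + u i)
        (fun i _ => add_nonneg (Finset.sum_nonneg fun j _ => mul_nonneg (hB i j) (hu0 j)) (hu0 i))
        (Finset.mem_univ i)
    have := hu0 i; linarith
  have hKu : ∀ i, u i ≤ K := by
    intro i
    have h1 : (∑ j, B i j * u j) + u i ≤ ∑ i, ((∑ j, B i j * u j) + u i) :=
      Finset.single_le_sum (f := fun i => (∑ j, B i j * u j) + u i)
        (fun i _ => add_nonneg (Finset.sum_nonneg fun j _ => mul_nonneg (hB i j) (hu0 j)) (hu0 i))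
        (Finset.mem_univ i)
    have : 0 ≤ ∑ j, B i j * u j := Finset.sum_nonneg fun j _ => mul_nonneg (hB i j) (hu0 j)
    linarith
  have hK0 : (0:ℝ) < K := by linarith
  set η : ℝ := min (lam / K) (1 / K) with hη
  have hη0 : 0 < η := lt_min (div_pos hlam hK0) (div_pos one_pos hK0)
  have hηu1 : ∀ i, η * u i ≤ 1 := by
    intro i
    calc η * u i ≤ (1 / K) * K :=
          mul_le_mul (min_le_right _ _) (hKu i) (hu0 i) (le_of_lt (div_pos one_pos hK0))
      _ = 1 := by field_simp
  have hηB : ∀ i, η * (∑ j, B i j * u j) ≤ lam := by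
    intro i
    calc η * (∑ j, B i j * u j) ≤ (lam / K) * K :=
          mul_le_mul (min_le_left _ _) (hKB i)
            (Finset.sum_nonneg fun j _ => mul_nonneg (hB i j) (hu0 j))
            (le_of_lt (div_pos hlam hK0))
      _ = lam := by field_simp
  -- the monotone map G
  set S : (Fin N → ℝ) → Fin N → ℝ := fun x i => ∑ j, B i j * x j with hS
  set G : (Fin N → ℝ) → Fin N → ℝ := fun x i => S x i / (δ i + S x i) with hG
  have hSnn : ∀ x, (∀ i, 0 ≤ x i) → ∀ i, 0 ≤ S x i := fun x hx i =>
    Finset.sum_nonneg fun j _ => mul_nonneg (hB i j) (hx j)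
  have hGmono : ∀ x y, (∀ i, 0 ≤ x i) → (∀ i, x i ≤ y i) → ∀ i, G x i ≤ G y i := by
    intro x y hx hxy i
    have hSx : 0 ≤ S x i := hSnn x hx i
    have hSxy : S x i ≤ S y i :=
      Finset.sum_le_sum fun j _ => mul_le_mul_of_nonneg_left (hxy j) (hB i j)
    have h1 : 0 < δ i + S x i := by linarith [hδ i]
    have h2 : 0 < δ i + S y i := by linarith [hδ i]
    rw [div_le_div_iff₀ h1 h2]
    nlinarith [hδ i]
  set x₀ : Fin N → ℝ := fun i => η * u i with hx₀
  have hx₀sub : ∀ i, x₀ i ≤ G x₀ i := by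
    intro i
    rcases eq_or_lt_of_le (hu0 i) with h | h
    · have : x₀ i = 0 := by simp [hx₀, ← h]
      rw [this]
      exact div_nonneg (hSnn x₀ (fun j => mul_nonneg hη0.le (hu0 j)) i)
        (by linarith [hδ i, hSnn x₀ (fun j => mul_nonneg hη0.le (hu0 j)) i])
    · have hSx : S x₀ i = η * (∑ j, B i j * u j) := by
        simp only [hS, hx₀]
        rw [Finset.mul_sum]
        exact Finset.sum_congr rfl fun j _ => by ring
      have hge : η * (lam + δ i) * u i ≤ S x₀ i := by
        rw [hSx]
        have := hkey i
        nlinarith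
      have hpos : 0 < δ i + S x₀ i := by
        linarith [hδ i, hSnn x₀ (fun j => mul_nonneg hη0.le (hu0 j)) i]
      rw [le_div_iff₀ hpos]
      have h5 : η * u i * S x₀ i ≤ η * lam * u i := by
        rw [hSx]
        have h6 : 0 ≤ η * u i := mul_nonneg hη0.le (hu0 i)
        calc η * u i * (η * ∑ j, B i j * u j) ≤ η * u i * lam :=
              mul_le_mul_of_nonneg_left (hηB i) h6
          _ = η * lam * u i := by ring
      have h7 : x₀ i * (δ i + S x₀ i) = η * u i * δ i + η * u i * S x₀ i := by
        simp only [hx₀]; ring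
      nlinarith [hge, h5, h7]
  -- Tarski greatest-fixed-point construction
  set A : Set (Fin N → ℝ) := {x | (∀ i, 0 ≤ x i ∧ x i ≤ 1) ∧ ∀ i, x i ≤ G x i} with hA
  have hx₀A : x₀ ∈ A :=
    ⟨fun i => ⟨mul_nonneg hη0.le (hu0 i), hηu1 i⟩, hx₀sub⟩
  set pss : Fin N → ℝ := fun i => sSup ((fun x => x i) '' A) with hpss
  have hbdd : ∀ i, BddAbove ((fun x : Fin N → ℝ => x i) '' A) := by
    intro i
    exact ⟨1, fun y ⟨x, hx, e⟩ => e ▸ (hx.1 i).2⟩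
  have hne : ∀ i, ((fun x : Fin N → ℝ => x i) '' A).Nonempty := fun i => ⟨x₀ i, x₀, hx₀A, rfl⟩
  have hle : ∀ x ∈ A, ∀ i, x i ≤ pss i := fun x hx i => le_csSup (hbdd i) ⟨x, hx, rfl⟩
  have hp0 : ∀ i, 0 ≤ pss i := fun i =>
    le_trans (mul_nonneg hη0.le (hu0 i)) (hle x₀ hx₀A i)
  have hp1 : ∀ i, pss i ≤ 1 := fun i =>
    csSup_le (hne i) fun y ⟨x, hx, e⟩ => e ▸ (hx.1 i).2
  have hsub : ∀ i, pss i ≤ G pss i := by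
    intro i
    refine csSup_le (hne i) fun y ⟨x, hx, e⟩ => ?_
    subst e
    exact le_trans (hx.2 i) (hGmono x pss (fun j => (hx.1 j).1) (hle x hx) i)
  have hpssA : pss ∈ A := ⟨fun i => ⟨hp0 i, hp1 i⟩, hsub⟩
  have hGpssA : G pss ∈ A := by
    refine ⟨fun i => ⟨?_, ?_⟩, hGmono pss (G pss) hp0 hsub⟩
    · exact div_nonneg (hSnn pss hp0 i) (by linarith [hδ i, hSnn pss hp0 i])
    · rw [div_le_one (by linarith [hδ i, hSnn pss hp0 i])]
      linarith [hδ i]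
  have hfix : ∀ i, G pss i = pss i := fun i =>
    le_antisymm (hle (G pss) hGpssA i) (hsub i)
  have hpssx₀ : ∀ i, x₀ i ≤ pss i := hle x₀ hx₀A
  -- positivity via irreducibility
  have hpos : ∀ i, 0 < pss i := by
    by_contra hcon
    push_neg at hcon
    obtain ⟨i₁, hi₁⟩ := hcon
    have hi₁0 : pss i₁ = 0 := le_antisymm hi₁ (hp0 i₁)
    set Z : Finset (Fin N) := Finset.univ.filter (fun i => pss i = 0) with hZ
    have hZne : Z.Nonempty := ⟨i₁, by simp [hZ, hi₁0]⟩
    have hZuniv : Z ≠ Finset.univ := by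
      intro h
      have : j₀ ∈ Z := h ▸ Finset.mem_univ j₀
      have h2 : pss j₀ = 0 := by simpa [hZ] using this
      have : 0 < pss j₀ := lt_of_lt_of_le (mul_pos hη0 hj₀) (hpssx₀ j₀)
      linarith
    obtain ⟨i, hiZ, j, hjZ, hBij⟩ := hirr Z hZne hZuniv
    have hpssi : pss i = 0 := by simpa [hZ] using hiZ
    have hSi : S pss i = 0 := by
      have := hfix i
      rw [hpssi] at this
      have hpos' : 0 < δ i + S pss i := by linarith [hδ i, hSnn pss hp0 i]
      have := div_eq_zero_iff.1 this
      rcases this with h | h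
      · exact h
      · linarith
    have : ∀ k ∈ Finset.univ, B i k * pss k = 0 := by
      have h2 := (Finset.sum_eq_zero_iff_of_nonneg
        (fun k _ => mul_nonneg (hB i k) (hp0 k))).1 hSi
      exact h2
    have hj : B i j * pss j = 0 := this j (Finset.mem_univ j)
    have hpssj : pss j = 0 := by
      rcases mul_eq_zero.1 hj with h | h
      · exact absurd h hBij
      · exact h
    exact hjZ (by simp [hZ, hpssj])
  refine ⟨pss, fun i => ⟨hpos i, ?_⟩, fun i => ?_⟩
  · rw [← hfix i]
    rw [div_lt_one (by linarith [hδ i, hSnn pss hp0 i])]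
    linarith [hδ i]
  · have h1 := hfix i
    have hpos' : 0 < δ i + S pss i := by linarith [hδ i, hSnn pss hp0 i]
    have h2 : S pss i = pss i * (δ i + S pss i) := (div_eq_iff hpos'.ne').1 h1
    have hSeq : (∑ j, B i j * pss j) = S pss i := rfl
    rw [hSeq]
    nlinarith [h2]


lemma box_invariant (N : ℕ) (δ : Fin N → ℝ) (hδ : ∀ i, 0 < δ i)
    (B : Matrix (Fin N) (Fin N) ℝ) (hB : ∀ i j, 0 ≤ B i j)
    (p : ℝ → Fin N → ℝ)
    (hp0 : ∀ i, p 0 i ∈ Set.Icc (0 : ℝ) 1)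
    (hderiv : ∀ i, ∀ t : ℝ, 0 ≤ t →
      HasDerivAt (fun s => p s i)
        (-(δ i) * p t i + ∑ j, B i j * p t j * (1 - p t i)) t) :
    ∀ t, 0 ≤ t → ∀ i, 0 ≤ p t i ∧ p t i ≤ 1 := by
  classical
  set Sb : ℝ := 1 + ∑ i, ∑ j, B i j with hSb
  have hSb1 : 1 ≤ Sb := by
    have : 0 ≤ ∑ i, ∑ j, B i j :=
      Finset.sum_nonneg fun i _ => Finset.sum_nonneg fun j _ => hB i j
    linarith
  have hSbrow : ∀ i, ∑ j, B i j ≤ Sb := by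
    intro i
    have h1 : ∑ j, B i j ≤ ∑ i, ∑ j, B i j :=
      Finset.single_le_sum (f := fun i => ∑ j, B i j)
        (fun i _ => Finset.sum_nonneg fun j _ => hB i j) (Finset.mem_univ i)
    linarith
  set C : ℝ := 2 * Sb + 1 with hC
  have hC0 : 0 < C := by linarith
  intro t ht i
  -- work on [0, T] with T := t
  have key : ∀ ε : ℝ, 0 < ε → ε ≤ Real.exp (-(C * t)) →
      ∀ i, - (ε * Real.exp (C * t)) < p t i ∧ p t i < 1 + ε * Real.exp (C * t) := by
    intro ε hε hεe
    set w : (Fin N ⊕ Fin N) → ℝ → ℝ := fun k s =>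
      Sum.elim (fun i => p s i + ε * Real.exp (C * s))
        (fun i => 1 + ε * Real.exp (C * s) - p s i) k with hw
    set d : (Fin N ⊕ Fin N) → ℝ → ℝ := fun k s =>
      Sum.elim
        (fun i => (-(δ i) * p s i + ∑ j, B i j * p s j * (1 - p s i)) + ε * (Real.exp (C * s) * C))
        (fun i => ε * (Real.exp (C * s) * C) - (-(δ i) * p s i + ∑ j, B i j * p s j * (1 - p s i))) k
      with hd
    have hexp : ∀ s : ℝ, HasDerivAt (fun r => ε * Real.exp (C * r)) (ε * (Real.exp (C * s) * C)) s := by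
      intro s
      have h1 : HasDerivAt (fun r : ℝ => C * r) C s := by
        simpa using (hasDerivAt_id s).const_mul C
      exact (h1.exp).const_mul ε
    have hwderiv : ∀ k s, (0:ℝ) ≤ s → HasDerivAt (w k) (d k s) s := by
      rintro (i | i) s hs
      · exact (hderiv i s hs).add (hexp s)
      · have h := ((hexp s).sub (hderiv i s hs)).const_add 1
        have heq : w (Sum.inr i) = fun x => 1 + (ε * Real.exp (C * x) - p x i) := by
          funext x; simp only [hw, Sum.elim_inr]; ring
        rw [heq]; exact h
    have h0 : ∀ k, 0 < w k 0 := by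
      rintro (i | i) <;> simp only [hw, Sum.elim_inl, Sum.elim_inr, mul_zero, Real.exp_zero, mul_one]
      · have := (hp0 i).1; linarith
      · have := (hp0 i).2; linarith
    have hstep : ∀ s, (0:ℝ) ≤ s → s ≤ t → (∀ j, 0 ≤ w j s) → ∀ k, w k s = 0 → 0 < d k s := by
      intro s hs hst hge k hk
      set E : ℝ := ε * Real.exp (C * s) with hE
      have hE0 : 0 < E := mul_pos hε (Real.exp_pos _)
      have hE1 : E ≤ 1 := by
        have h1 : Real.exp (C * s) ≤ Real.exp (C * t) :=
          Real.exp_le_exp.2 (mul_le_mul_of_nonneg_left hst hC0.le)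
        have h2 : ε * Real.exp (C * t) ≤ Real.exp (-(C * t)) * Real.exp (C * t) :=
          mul_le_mul_of_nonneg_right hεe (Real.exp_pos _).le
        have h3 : Real.exp (-(C * t)) * Real.exp (C * t) = 1 := by
          rw [← Real.exp_add]; simp
        have h4 : ε * Real.exp (C * s) ≤ ε * Real.exp (C * t) :=
          mul_le_mul_of_nonneg_left h1 hε.le
        linarith
      have hlow : ∀ j, -E ≤ p s j := by
        intro j
        have := hge (Sum.inl j)
        simp only [hw, Sum.elim_inl] at this
        linarith
      have hhigh : ∀ j, p s j ≤ 1 + E := by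
        intro j
        have := hge (Sum.inr j)
        simp only [hw, Sum.elim_inr] at this
        linarith
      rcases k with i | i
      · -- p s i = -E
        simp only [hw, Sum.elim_inl] at hk
        have hpi : p s i = -E := by linarith
        simp only [hd, Sum.elim_inl]
        have h1pi : 1 - p s i = 1 + E := by rw [hpi]; ring
        have hsum : -(2 * Sb * E) ≤ ∑ j, B i j * p s j * (1 - p s i) := by
          have hterm : ∀ j ∈ Finset.univ, -(B i j * (E * (1 + E))) ≤ B i j * p s j * (1 - p s i) := by
            intro j _
            rw [h1pi]
            have h2 : B i j * (-E) ≤ B i j * p s j :=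
              mul_le_mul_of_nonneg_left (hlow j) (hB i j)
            nlinarith [hE0, hB i j]
          have h3 : ∑ j, -(B i j * (E * (1 + E))) ≤ ∑ j, B i j * p s j * (1 - p s i) :=
            Finset.sum_le_sum hterm
          have h4 : ∑ j, -(B i j * (E * (1 + E))) = -((∑ j, B i j) * (E * (1 + E))) := by
            rw [Finset.sum_neg_distrib, Finset.sum_mul]
          rw [h4] at h3
          have hA1 : (∑ j, B i j) * (E * (1 + E)) ≤ Sb * (E * (1 + E)) :=
            mul_le_mul_of_nonneg_right (hSbrow i) (by nlinarith [hE0])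
          have hA2 : Sb * (E * (1 + E)) ≤ Sb * (E * 2) :=
            mul_le_mul_of_nonneg_left (by nlinarith [hE0, hE1]) (by linarith)
          nlinarith
        have hec2 : ε * (Real.exp (C * s) * C) = (2 * Sb + 1) * E := by
          rw [hE, hC]; ring
        have hterm0 : -(δ i) * p s i = δ i * E := by rw [hpi]; ring
        have hmp : 0 < δ i * E := mul_pos (hδ i) hE0
        have hsp : 0 ≤ Sb * E := mul_nonneg (by linarith) hE0.le
        linarith [hsum, hec2, hterm0, hmp, hE0]
      · -- p s i = 1 + E
        simp only [hw, Sum.elim_inr] at hk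
        have hpi : p s i = 1 + E := by linarith
        simp only [hd, Sum.elim_inr]
        have h1pi : 1 - p s i = -E := by rw [hpi]; ring
        have hsum : ∑ j, B i j * p s j * (1 - p s i) ≤ Sb * E := by
          have hterm : ∀ j ∈ Finset.univ, B i j * p s j * (1 - p s i) ≤ B i j * (E * E) := by
            intro j _
            rw [h1pi]
            have h2 : B i j * (-E) ≤ B i j * p s j :=
              mul_le_mul_of_nonneg_left (hlow j) (hB i j)
            nlinarith [hE0, hB i j]
          have h3 : ∑ j, B i j * p s j * (1 - p s i) ≤ ∑ j, B i j * (E * E) :=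
            Finset.sum_le_sum hterm
          have h4 : ∑ j, B i j * (E * E) = (∑ j, B i j) * (E * E) := by
            rw [← Finset.sum_mul]
          rw [h4] at h3
          have hA1 : (∑ j, B i j) * (E * E) ≤ Sb * (E * E) :=
            mul_le_mul_of_nonneg_right (hSbrow i) (mul_nonneg hE0.le hE0.le)
          have hA2 : Sb * (E * E) ≤ Sb * E :=
            mul_le_mul_of_nonneg_left (by nlinarith [hE0, hE1]) (by linarith)
          linarith
        have hec2 : ε * (Real.exp (C * s) * C) = (2 * Sb + 1) * E := by
          rw [hE, hC]; ring
        have hterm0 : -(δ i) * p s i = -(δ i * (1 + E)) := by rw [hpi]; ring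
        have hmp : 0 ≤ δ i * (1 + E) := mul_nonneg (hδ i).le (by linarith)
        have hsp : 0 < Sb * E := mul_pos (by linarith) hE0
        linarith [hsum, hec2, hterm0, hmp, hE0, hsp]
    intro i'
    have h1 := barrier_lemma 0 t w d hwderiv h0 hstep t ht le_rfl (Sum.inl i')
    have h2 := barrier_lemma 0 t w d hwderiv h0 hstep t ht le_rfl (Sum.inr i')
    simp only [hw, Sum.elim_inl, Sum.elim_inr] at h1 h2
    constructor <;> linarith
  set e0 : ℝ := Real.exp (-(C * t)) with he0
  set eC : ℝ := Real.exp (C * t) with heC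
  have he00 : 0 < e0 := Real.exp_pos _
  have heC0 : 0 < eC := Real.exp_pos _
  constructor
  · by_contra hcon
    push_neg at hcon
    set ε : ℝ := min e0 ((-p t i) / eC) with hεdef
    have hε0 : 0 < ε := lt_min he00 (div_pos (by linarith) heC0)
    have h1 := (key ε hε0 (min_le_left _ _) i).1
    have h2 : ε * eC ≤ -p t i := by
      have h3 : ε ≤ (-p t i) / eC := min_le_right _ _
      calc ε * eC ≤ ((-p t i) / eC) * eC := mul_le_mul_of_nonneg_right h3 heC0.le
        _ = -p t i := by field_simp
    linarith
  · by_contra hcon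
    push_neg at hcon
    set ε : ℝ := min e0 ((p t i - 1) / eC) with hεdef
    have hε0 : 0 < ε := lt_min he00 (div_pos (by linarith) heC0)
    have h1 := (key ε hε0 (min_le_left _ _) i).2
    have h2 : ε * eC ≤ p t i - 1 := by
      have h3 : ε ≤ (p t i - 1) / eC := min_le_right _ _
      calc ε * eC ≤ ((p t i - 1) / eC) * eC := mul_le_mul_of_nonneg_right h3 heC0.le
        _ = p t i - 1 := by field_simp
    linarith


lemma stay_pos (N : ℕ) (δ : Fin N → ℝ) (hδ : ∀ i, 0 < δ i)
    (B : Matrix (Fin N) (Fin N) ℝ) (hB : ∀ i j, 0 ≤ B i j)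
    (p : ℝ → Fin N → ℝ)
    (hbox : ∀ t, 0 ≤ t → ∀ i, 0 ≤ p t i ∧ p t i ≤ 1)
    (hderiv : ∀ i, ∀ t : ℝ, 0 ≤ t →
      HasDerivAt (fun s => p s i)
        (-(δ i) * p t i + ∑ j, B i j * p t j * (1 - p t i)) t)
    (i : Fin N) (t₁ t₂ : ℝ) (h1 : 0 ≤ t₁) (h12 : t₁ ≤ t₂) (hpos : 0 < p t₁ i) :
    0 < p t₂ i := by
  rcases eq_or_lt_of_le h12 with h | h
  · rwa [← h]
  set g : ℝ → ℝ := fun s => p s i * Real.exp (δ i * s) with hg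
  have hgderiv : ∀ s, 0 ≤ s → HasDerivAt g
      ((-(δ i) * p s i + ∑ j, B i j * p s j * (1 - p s i)) * Real.exp (δ i * s)
        + p s i * (Real.exp (δ i * s) * δ i)) s := by
    intro s hs
    have hexp : HasDerivAt (fun r : ℝ => Real.exp (δ i * r)) (Real.exp (δ i * s) * δ i) s := by
      have h1 : HasDerivAt (fun r : ℝ => δ i * r) (δ i) s := by
        simpa using (hasDerivAt_id s).const_mul (δ i)
      exact h1.exp
    exact (hderiv i s hs).mul hexp
  have hmono : MonotoneOn g (Icc t₁ t₂) := by
    apply monotoneOn_of_deriv_nonneg (convex_Icc _ _)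
    · intro s hs
      exact (hgderiv s (le_trans h1 hs.1)).continuousAt.continuousWithinAt
    · intro s hs
      rw [interior_Icc] at hs
      exact (hgderiv s (le_trans h1 hs.1.le)).differentiableAt.differentiableWithinAt
    · intro s hs
      rw [interior_Icc] at hs
      have hs0 : (0:ℝ) ≤ s := le_trans h1 hs.1.le
      rw [(hgderiv s hs0).deriv]
      have hbb := hbox s hs0
      have hsum : 0 ≤ ∑ j, B i j * p s j * (1 - p s i) :=
        Finset.sum_nonneg fun j _ => mul_nonneg
          (mul_nonneg (hB i j) (hbb j).1) (by linarith [(hbb i).2])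
      have : (-(δ i) * p s i + ∑ j, B i j * p s j * (1 - p s i)) * Real.exp (δ i * s)
          + p s i * (Real.exp (δ i * s) * δ i)
          = Real.exp (δ i * s) * (∑ j, B i j * p s j * (1 - p s i)) := by ring
      rw [this]
      exact mul_nonneg (Real.exp_pos _).le hsum
  have hle : g t₁ ≤ g t₂ := hmono ⟨le_refl _, h12⟩ ⟨h12, le_refl _⟩ h12
  have hg1 : 0 < g t₁ := mul_pos hpos (Real.exp_pos _)
  have hg2 : 0 < p t₂ i * Real.exp (δ i * t₂) := by
    have : g t₂ = p t₂ i * Real.exp (δ i * t₂) := rfl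
    linarith [hle, hg1]
  by_contra hcon
  push_neg at hcon
  nlinarith [Real.exp_pos (δ i * t₂), hg2]

lemma pos_at_one (N : ℕ) (δ : Fin N → ℝ) (hδ : ∀ i, 0 < δ i)
    (B : Matrix (Fin N) (Fin N) ℝ) (hB : ∀ i j, 0 ≤ B i j)
    (hirr : MatrixIrreducible B)
    (p : ℝ → Fin N → ℝ)
    (hp0 : ∀ i, p 0 i ∈ Set.Icc (0 : ℝ) 1)
    (hpne : p 0 ≠ 0)
    (hbox : ∀ t, 0 ≤ t → ∀ i, 0 ≤ p t i ∧ p t i ≤ 1)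
    (hderiv : ∀ i, ∀ t : ℝ, 0 ≤ t →
      HasDerivAt (fun s => p s i)
        (-(δ i) * p t i + ∑ j, B i j * p t j * (1 - p t i)) t) :
    ∀ i, 0 < p 1 i := by
  classical
  obtain ⟨i₀, hi₀⟩ : ∃ i₀, p 0 i₀ ≠ 0 := by
    by_contra hcon
    push_neg at hcon
    exact hpne (funext hcon)
  have hi₀pos : 0 < p 0 i₀ := lt_of_le_of_ne (hp0 i₀).1 (Ne.symm hi₀)
  intro i₁
  by_contra hcon
  push_neg at hcon
  have hi₁0 : p 1 i₁ = 0 := le_antisymm hcon (hbox 1 zero_le_one i₁).1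
  set Z : Finset (Fin N) := Finset.univ.filter (fun i => p 1 i = 0) with hZ
  have hZne : Z.Nonempty := ⟨i₁, by simp [hZ, hi₁0]⟩
  have hZuniv : Z ≠ Finset.univ := by
    intro h
    have h1 : i₀ ∈ Z := h ▸ Finset.mem_univ i₀
    have h2 : p 1 i₀ = 0 := by simpa [hZ] using h1
    have h3 : 0 < p 1 i₀ := stay_pos N δ hδ B hB p hbox hderiv i₀ 0 1 le_rfl zero_le_one hi₀pos
    linarith
  obtain ⟨i, hiZ, j, hjZ, hBij⟩ := hirr Z hZne hZuniv
  have hpi1 : p 1 i = 0 := by simpa [hZ] using hiZ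
  have hzero : ∀ s, 0 ≤ s → s ≤ 1 → p s i = 0 := by
    intro s hs hs1
    by_contra hne
    have hpos : 0 < p s i := lt_of_le_of_ne (hbox s hs i).1 (Ne.symm hne)
    have := stay_pos N δ hδ B hB p hbox hderiv i s 1 hs hs1 hpos
    linarith
  have hpj : ∀ s, s ∈ Ioo (0:ℝ) 1 → p s j = 0 := by
    intro s hs
    have hd1 : HasDerivAt (fun r => p r i)
        (-(δ i) * p s i + ∑ k, B i k * p s k * (1 - p s i)) s := hderiv i s hs.1.le
    have hd2 : HasDerivAt (fun r => p r i) 0 s := by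
      have hev : (fun r => p r i) =ᶠ[nhds s] (fun _ => (0:ℝ)) := by
        filter_upwards [Ioo_mem_nhds hs.1 hs.2] with r hr
        exact hzero r hr.1.le hr.2.le
      exact (hasDerivAt_const s 0).congr_of_eventuallyEq hev
    have huniq : -(δ i) * p s i + ∑ k, B i k * p s k * (1 - p s i) = 0 :=
      hd1.unique hd2
    rw [hzero s hs.1.le hs.2.le] at huniq
    have hsum : ∑ k, B i k * p s k * (1 - (0:ℝ)) = 0 := by linarith [huniq]
    have hterm : ∀ k ∈ Finset.univ, 0 ≤ B i k * p s k * (1 - (0:ℝ)) := by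
      intro k _
      have := (hbox s hs.1.le k).1
      nlinarith [hB i k]
    have hall := (Finset.sum_eq_zero_iff_of_nonneg hterm).1 hsum
    have hj := hall j (Finset.mem_univ j)
    have : B i j * p s j = 0 := by linarith [hj]
    rcases mul_eq_zero.1 this with h | h
    · exact absurd h hBij
    · exact h
  -- continuity from the left at 1
  have hcont : Tendsto (fun s => p s j) (nhdsWithin 1 (Iio 1)) (nhds (p 1 j)) :=
    ((hderiv j 1 zero_le_one).continuousAt).continuousWithinAt.tendsto
  have hzero' : Tendsto (fun s => p s j) (nhdsWithin 1 (Iio 1)) (nhds 0) := by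
    have hev : (fun s => p s j) =ᶠ[nhdsWithin 1 (Iio 1)] (fun _ => (0:ℝ)) := by
      filter_upwards [Ioo_mem_nhdsLT_of_mem (⟨zero_lt_one, le_refl (1:ℝ)⟩ : (1:ℝ) ∈ Ioc 0 1)] with s hs
      exact hpj s hs
    exact Tendsto.congr' hev.symm tendsto_const_nhds
  have : p 1 j = 0 := tendsto_nhds_unique hcont hzero'
  have : j ∈ Z := by simp [hZ, this]
  exact hjZ this

/-- Heterogeneous SIS network model above the threshold: if `B − D` has a
real eigenvalue `λ > 0`, then there is an endemic equilibrium `p** ∈ (0,1)^N` with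
`δᵢ pᵢ** = Σⱼ β_{ij} pⱼ** (1 − pᵢ**)` to which every solution of
`pᵢ' = −δᵢ pᵢ + Σⱼ β_{ij} pⱼ (1 − pᵢ)` with `p 0 ∈ [0,1]^N`, `p 0 ≠ 0`, converges. -/
theorem stmt_9 (N : ℕ) (hN : 1 ≤ N)
    (δ : Fin N → ℝ) (hδ : ∀ i, 0 < δ i)
    (B : Matrix (Fin N) (Fin N) ℝ) (hB : ∀ i j, 0 ≤ B i j)
    (hirr : MatrixIrreducible B)
    (heig : ∃ lam : ℝ, 0 < lam ∧ lam ∈ spectrum ℝ (B - Matrix.diagonal δ)) :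
    ∃ pss : Fin N → ℝ,
      (∀ i, pss i ∈ Set.Ioo (0 : ℝ) 1) ∧
      (∀ i, δ i * pss i = ∑ j, B i j * pss j * (1 - pss i)) ∧
      ∀ p : ℝ → Fin N → ℝ,
        (∀ i, p 0 i ∈ Set.Icc (0 : ℝ) 1) →
        p 0 ≠ 0 →
        (∀ i, ∀ t : ℝ, 0 ≤ t →
          HasDerivAt (fun s => p s i)
            (-(δ i) * p t i + ∑ j, B i j * p t j * (1 - p t i)) t) →
        Filter.Tendsto p Filter.atTop (nhds pss) := by
  classical
  obtain ⟨pss, hpss01, hpsseq⟩ := equilibrium_exists N hN δ hδ B hB hirr heig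
  have hps0 : ∀ i, 0 < pss i := fun i => (hpss01 i).1
  have hps1 : ∀ i, pss i < 1 := fun i => (hpss01 i).2
  refine ⟨pss, fun i => ⟨hps0 i, hps1 i⟩, fun i => by rw [hpsseq i, Finset.sum_mul], ?_⟩
  intro p hp0 hpne hderiv
  have hbox := box_invariant N δ hδ B hB p hp0 hderiv
  have hpos1 := pos_at_one N δ hδ B hB hirr p hp0 hpne hbox hderiv
  have hNE : Nonempty (Fin N) := ⟨⟨0, hN⟩⟩
  have hune : (Finset.univ : Finset (Fin N)).Nonempty := Finset.univ_nonempty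
  set c : ℝ := Finset.univ.inf' hune (fun i => δ i * pss i / (1 - pss i)) with hcdef
  have hc0 : 0 < c := by
    rw [hcdef, Finset.lt_inf'_iff]
    intro i _
    exact div_pos (mul_pos (hδ i) (hps0 i)) (by linarith [hps1 i])
  have hcle : ∀ i, c * (1 - pss i) ≤ δ i * pss i := by
    intro i
    have h1 : c ≤ δ i * pss i / (1 - pss i) :=
      Finset.inf'_le _ (Finset.mem_univ i)
    have h2 : (0:ℝ) < 1 - pss i := by linarith [hps1 i]
    calc c * (1 - pss i) ≤ (δ i * pss i / (1 - pss i)) * (1 - pss i) :=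
          mul_le_mul_of_nonneg_right h1 h2.le
      _ = δ i * pss i := by field_simp
  set γ : ℝ := c / 2 with hγdef
  have hγ0 : 0 < γ := by rw [hγdef]; linarith
  set A : ℝ := ∑ i, (1 / pss i + 1 / p 1 i) with hAdef
  have htermpos : ∀ i, 0 < 1 / pss i + 1 / p 1 i := fun i =>
    add_pos (div_pos one_pos (hps0 i)) (div_pos one_pos (hpos1 i))
  have hA0 : 0 < A := Finset.sum_pos (fun i _ => htermpos i) hune
  have hA1 : ∀ i, 1 / pss i ≤ A := by
    intro i
    have h1 : 1 / pss i + 1 / p 1 i ≤ A :=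
      Finset.single_le_sum (f := fun i => 1 / pss i + 1 / p 1 i)
        (fun i _ => (htermpos i).le) (Finset.mem_univ i)
    have := div_pos one_pos (hpos1 i)
    linarith
  have hA2 : ∀ i, 1 / p 1 i ≤ A := by
    intro i
    have h1 : 1 / pss i + 1 / p 1 i ≤ A :=
      Finset.single_le_sum (f := fun i => 1 / pss i + 1 / p 1 i)
        (fun i _ => (htermpos i).le) (Finset.mem_univ i)
    have := div_pos one_pos (hps0 i)
    linarith
  set M : ℝ → ℝ := fun t => 1 + A * Real.exp (-γ * (t - 1)) with hMdef
  set Md : ℝ → ℝ := fun t => A * (Real.exp (-γ * (t - 1)) * (-γ)) with hMddef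
  have hM1 : ∀ t, 1 < M t := fun t => by
    have := mul_pos hA0 (Real.exp_pos (-γ * (t - 1)))
    simp only [hMdef]; linarith
  have hM0 : ∀ t, (0:ℝ) < M t := fun t => lt_trans zero_lt_one (hM1 t)
  have hMd' : ∀ t, HasDerivAt M (Md t) t := by
    intro t
    have h1 : HasDerivAt (fun r : ℝ => -γ * (r - 1)) (-γ) t := by
      simpa using ((hasDerivAt_id t).sub_const 1).const_mul (-γ)
    have h2 := (h1.exp).const_mul A
    simpa [hMdef, hMddef] using h2.const_add 1
  have hMdval : ∀ t, Md t = -(γ * (M t - 1)) := by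
    intro t; simp only [hMdef, hMddef]; ring
  have hM11 : M 1 = 1 + A := by simp [hMdef]
  -- barrier family
  set w : (Fin N ⊕ Fin N) → ℝ → ℝ := fun k t =>
    Sum.elim (fun i => pss i * M t - p t i) (fun i => p t i - pss i / M t) k with hw
  set d : (Fin N ⊕ Fin N) → ℝ → ℝ := fun k t =>
    Sum.elim
      (fun i => pss i * Md t - (-(δ i) * p t i + ∑ j, B i j * p t j * (1 - p t i)))
      (fun i => (-(δ i) * p t i + ∑ j, B i j * p t j * (1 - p t i))
        - (0 * M t - pss i * Md t) / (M t) ^ 2) k with hd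
  have hwd : ∀ k t, (1:ℝ) ≤ t → HasDerivAt (w k) (d k t) t := by
    rintro (i | i) t ht
    · exact ((hMd' t).const_mul (pss i)).sub (hderiv i t (by linarith))
    · exact (hderiv i t (by linarith)).sub
        ((hasDerivAt_const t (pss i)).div (hMd' t) (ne_of_gt (hM0 t)))
  have h0 : ∀ k, 0 < w k 1 := by
    rintro (i | i) <;> simp only [hw, Sum.elim_inl, Sum.elim_inr, hM11]
    · have h1 : 1 / pss i ≤ A := hA1 i
      have h2 : pss i * (1 / pss i) ≤ pss i * A :=
        mul_le_mul_of_nonneg_left h1 (hps0 i).le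
      have h3 : pss i * (1 / pss i) = 1 := by
        rw [mul_one_div, div_self (ne_of_gt (hps0 i))]
      have h4 := (hbox 1 zero_le_one i).2
      nlinarith [hps0 i]
    · rw [sub_pos, div_lt_iff₀ (by linarith)]
      have h1 : 1 / p 1 i ≤ A := hA2 i
      have h2 : p 1 i * (1 / p 1 i) ≤ p 1 i * A :=
        mul_le_mul_of_nonneg_left h1 (hpos1 i).le
      have h3 : p 1 i * (1 / p 1 i) = 1 := by
        rw [mul_one_div, div_self (ne_of_gt (hpos1 i))]
      nlinarith [hps1 i, hpos1 i]
  have hstep : ∀ b : ℝ, ∀ t, (1:ℝ) ≤ t → t ≤ b → (∀ j, 0 ≤ w j t) → ∀ k, w k t = 0 → 0 < d k t := by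
    intro b t ht _ hge k hk
    clear_value c γ A
    have ht0 : (0:ℝ) ≤ t := by linarith
    have hupper : ∀ j, p t j ≤ pss j * M t := by
      intro j
      have := hge (Sum.inl j); simp only [hw, Sum.elim_inl] at this; linarith
    have hlower : ∀ j, pss j / M t ≤ p t j := by
      intro j
      have := hge (Sum.inr j); simp only [hw, Sum.elim_inr] at this; linarith
    have hMt1 : 1 < M t := hM1 t
    have hMt0 : 0 < M t := hM0 t
    rcases k with i | i
    · -- upper barrier touching : p t i = pss i * M t
      simp only [hw, Sum.elim_inl] at hk
      have hx : p t i = pss i * M t := by linarith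
      simp only [hd, Sum.elim_inl]
      set Sp : ℝ := ∑ j, B i j * p t j with hSpdef
      set Ss : ℝ := ∑ j, B i j * pss j with hSsdef
      have hSp : ∑ j, B i j * p t j * (1 - p t i) = Sp * (1 - p t i) :=
        (Finset.sum_mul _ _ _).symm
      rw [hSp, hx, hMdval t]
      set a : ℝ := pss i with hadef
      set Mt : ℝ := M t with hMtdef
      have ha0 : 0 < a := hps0 i
      have h1a : 0 < 1 - a := by linarith [hps1 i]
      have hclei : c * (1 - a) ≤ δ i * a := hcle i
      have hSseq : Ss * (1 - a) = δ i * a := by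
        rw [hSsdef, hadef]; linarith [hpsseq i]
      clear_value a Mt Sp Ss
      have h1p : 0 ≤ 1 - a * Mt := by
        have h := (hbox t ht0 i).2
        rw [hx] at h; linarith
      have hSpM : Sp ≤ Mt * Ss := by
        have h1 : Sp ≤ ∑ j, B i j * (pss j * Mt) := by
          rw [hSpdef]
          exact Finset.sum_le_sum fun j _ =>
            mul_le_mul_of_nonneg_left (hupper j) (hB i j)
        have h2 : ∑ j, B i j * (pss j * Mt) = Mt * Ss := by
          rw [hSsdef, Finset.mul_sum]
          exact Finset.sum_congr rfl fun j _ => by ring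
        linarith
      have e1 : Sp * (1 - a * Mt) ≤ (Mt * Ss) * (1 - a * Mt) :=
        mul_le_mul_of_nonneg_right hSpM h1p
      have e4 : (1 - a) * (Sp * (1 - a * Mt)) ≤ (1 - a) * ((Mt * Ss) * (1 - a * Mt)) :=
        mul_le_mul_of_nonneg_left e1 h1a.le
      have e3 : (1 - a) * ((Mt * Ss) * (1 - a * Mt)) = Mt * (1 - a * Mt) * (δ i * a) := by
        linear_combination (Mt * (1 - a * Mt)) * hSseq
      have f0 : 0 ≤ a * Mt * (Mt - 1) :=
        mul_nonneg (mul_nonneg ha0.le hMt0.le) (by linarith)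
      have f1 : c * (1 - a) * (a * Mt * (Mt - 1)) ≤ (δ i * a) * (a * Mt * (Mt - 1)) :=
        mul_le_mul_of_nonneg_right hclei f0
      have hcM : 0 < c * (Mt - 1 / 2) := mul_pos hc0 (by linarith)
      have hbig : 0 < a * ((1 - a) * ((Mt - 1) * (c * (Mt - 1 / 2)))) :=
        mul_pos ha0 (mul_pos h1a (mul_pos (by linarith) hcM))
      have hγ2 : γ = c / 2 := hγdef
      have hT : 0 < (1 - a) *
          (a * (-(γ * (Mt - 1))) - (-(δ i) * (a * Mt) + Sp * (1 - a * Mt))) := by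
        nlinarith [e4, e3, f1, hbig, hγ2]
      by_contra hcon2
      push_neg at hcon2
      nlinarith [hT, h1a, hcon2]
    · -- lower barrier touching : p t i = pss i / M t
      simp only [hw, Sum.elim_inr] at hk
      have hx : p t i = pss i / M t := by linarith
      simp only [hd, Sum.elim_inr]
      have hxM : p t i * M t = pss i := by
        rw [hx]; field_simp
      set Sp : ℝ := ∑ j, B i j * p t j with hSpdef
      set Ss : ℝ := ∑ j, B i j * pss j with hSsdef
      have hSp : ∑ j, B i j * p t j * (1 - p t i) = Sp * (1 - p t i) :=
        (Finset.sum_mul _ _ _).symm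
      have hnum : 0 * M t - pss i * Md t = pss i * γ * (M t - 1) := by
        rw [hMdval t]; ring
      rw [hSp, hnum]
      set a : ℝ := pss i with hadef
      set Mt : ℝ := M t with hMtdef
      have ha0 : 0 < a := hps0 i
      have h1a : 0 < 1 - a := by linarith [hps1 i]
      have hclei : c * (1 - a) ≤ δ i * a := hcle i
      have hSseq : Ss * (1 - a) = δ i * a := by
        rw [hSsdef, hadef]; linarith [hpsseq i]
      clear_value a Mt Sp Ss
      have hMt2 : (0:ℝ) < Mt ^ 2 := by positivity
      rw [sub_pos, div_lt_iff₀ hMt2]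
      have hbb := hbox t ht0 i
      have h1p : 0 ≤ 1 - p t i := by linarith [hbb.2]
      have hp0' : 0 ≤ p t i := hbb.1
      have hSsle : Ss ≤ Sp * Mt := by
        have h1 : Ss ≤ ∑ j, B i j * (p t j * Mt) := by
          rw [hSsdef]
          refine Finset.sum_le_sum fun j _ => ?_
          have h2 : pss j ≤ p t j * Mt := (div_le_iff₀ hMt0).1 (hlower j)
          exact mul_le_mul_of_nonneg_left h2 (hB i j)
        have h2 : ∑ j, B i j * (p t j * Mt) = Sp * Mt := by
          rw [hSpdef, Finset.sum_mul]
          exact Finset.sum_congr rfl fun j _ => by ring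
        linarith
      have g2 : (1 - a) * (δ i * p t i * Mt ^ 2) = (1 - a) * (δ i * a * Mt) := by
        linear_combination ((1 - a) * δ i * Mt) * hxM
      have g3 : (1 - a) * (Sp * (1 - p t i) * Mt ^ 2) = (1 - a) * (Sp * Mt * (Mt - a))
          + (1 - a) * (Sp * Mt ^ 2 - Sp * Mt ^ 2) := by
        linear_combination (-(1 - a) * Sp * Mt) * hxM
      have h6 : Ss * (Mt - a) ≤ (Sp * Mt) * (Mt - a) :=
        mul_le_mul_of_nonneg_right hSsle (by linarith [hps1 i])
      have h8 : (1 - a) * (Ss * (Mt - a)) ≤ (1 - a) * ((Sp * Mt) * (Mt - a)) :=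
        mul_le_mul_of_nonneg_left h6 h1a.le
      have h7 : (1 - a) * (Ss * (Mt - a)) = δ i * a * (Mt - a) := by
        linear_combination (Mt - a) * hSseq
      have e5' : c * (1 - a) * (a * (Mt - 1)) ≤ (δ i * a) * (a * (Mt - 1)) :=
        mul_le_mul_of_nonneg_right hclei (mul_nonneg ha0.le (by linarith))
      have hbig2 : 0 < δ i * a * (a * (Mt - 1)) :=
        mul_pos (mul_pos (hδ i) ha0) (mul_pos ha0 (by linarith))
      have hγ2 : γ = c / 2 := hγdef
      have hT2 : 0 < (1 - a) *
          ((-(δ i) * p t i + Sp * (1 - p t i)) * Mt ^ 2 - a * γ * (Mt - 1)) := by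
        nlinarith [g2, g3, h8, h7, e5', hbig2, hγ2]
      by_contra hcon2
      push_neg at hcon2
      nlinarith [hT2, h1a, hcon2]
  -- apply the barrier lemma on [1, t] for every t
  have hbar : ∀ t, 1 ≤ t → ∀ i, pss i / M t < p t i ∧ p t i < pss i * M t := by
    intro t ht i
    have h1 := barrier_lemma 1 t w d (fun k s hs => hwd k s hs) h0
      (fun s hs1 hs2 => hstep t s hs1 hs2) t ht le_rfl (Sum.inl i)
    have h2 := barrier_lemma 1 t w d (fun k s hs => hwd k s hs) h0
      (fun s hs1 hs2 => hstep t s hs1 hs2) t ht le_rfl (Sum.inr i)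
    simp only [hw, Sum.elim_inl, Sum.elim_inr] at h1 h2
    constructor <;> linarith
  -- convergence
  have hexp0 : Filter.Tendsto (fun t : ℝ => Real.exp (-γ * (t - 1)))
      Filter.atTop (nhds 0) := by
    apply Real.tendsto_exp_atBot.comp
    have h1 : Filter.Tendsto (fun t : ℝ => t - 1) Filter.atTop Filter.atTop := by
      simpa [sub_eq_add_neg] using
        Filter.tendsto_atTop_add_const_right Filter.atTop (-1 : ℝ) Filter.tendsto_id
    exact Filter.Tendsto.const_mul_atTop_of_neg (by linarith : -γ < 0) h1
  have hMtend : Filter.Tendsto M Filter.atTop (nhds 1) := by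
    have h1 := (hexp0.const_mul A).const_add 1
    simpa [hMdef] using h1
  rw [tendsto_pi_nhds]
  intro i
  have hup : Filter.Tendsto (fun t => pss i * M t) Filter.atTop (nhds (pss i)) := by
    have h1 := hMtend.const_mul (pss i)
    rw [mul_one] at h1
    exact h1
  have hlo : Filter.Tendsto (fun t => pss i / M t) Filter.atTop (nhds (pss i)) := by
    have h1 := Filter.Tendsto.div
      (tendsto_const_nhds : Filter.Tendsto (fun _ : ℝ => pss i) Filter.atTop (nhds (pss i)))
      hMtend one_ne_zero
    rw [div_one] at h1
    exact h1
  refine tendsto_of_tendsto_of_tendsto_of_le_of_le' hlo hup ?_ ?_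
  · filter_upwards [Filter.eventually_ge_atTop 1] with t ht
    exact (hbar t ht i).1.le
  · filter_upwards [Filter.eventually_ge_atTop 1] with t ht
    exact (hbar t ht i).2.le
end
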